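/- arXiv:0804.1693 — 4 statements merged into one kernel-verified Lean document; each statement's English description precedes it below -/
import Mathlib

section
/- Let (M_h)_h be a sequence of subdivisions of [0,1], indexed by h ↓ 0, such that each M_h has maximal step at most h and M_h ⊆ M_{h'} whenever h > h'. Let M₀ > 0 and for each h let u_h : M_h → ℝ satisfy the discrete convexity inequalities and |u_h(x)| ≤ M₀ for all x ∈ M_h, and extend each u_h to [0,1] piecewise linearly. Then there exists a subsequence (u_{h'}) of (u_h) converging to a continuous convex function u defined on [0,1], with convergence uniform on every compact subset of (0,1). -/
open Set Filter

open Topology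

/-- `a` and `b` are adjacent points of the mesh `A`. -/
def Adj (A : Finset ℝ) (a b : ℝ) : Prop :=
  a ∈ A ∧ b ∈ A ∧ a < b ∧ ∀ c ∈ A, ¬(a < c ∧ c < b)

lemma adj_cell_exists {A : Finset ℝ} (h0 : (0:ℝ) ∈ A) (h1 : (1:ℝ) ∈ A)
    {t : ℝ} (ht0 : 0 ≤ t) (ht1 : t < 1) :
    ∃ a b, Adj A a b ∧ a ≤ t ∧ t < b := by
  classical
  have hne1 : (A.filter (fun p => p ≤ t)).Nonempty := ⟨0, by simp [h0, ht0]⟩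
  have hne2 : (A.filter (fun p => t < p)).Nonempty := ⟨1, by simp [h1, ht1]⟩
  set a := (A.filter (fun p => p ≤ t)).max' hne1 with ha
  set b := (A.filter (fun p => t < p)).min' hne2 with hb
  have haA : a ∈ A ∧ a ≤ t :=
    Finset.mem_filter.mp ((A.filter (fun p => p ≤ t)).max'_mem hne1)
  have hbA : b ∈ A ∧ t < b :=
    Finset.mem_filter.mp ((A.filter (fun p => t < p)).min'_mem hne2)
  refine ⟨a, b, ⟨haA.1, hbA.1, lt_of_le_of_lt haA.2 hbA.2, ?_⟩, haA.2, hbA.2⟩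
  rintro c hc ⟨hac, hcb⟩
  by_cases hct : c ≤ t
  · have : c ≤ a := Finset.le_max' _ c (by simp [hc, hct])
    linarith
  · push_neg at hct
    have : b ≤ c := Finset.min'_le _ c (by simp [hc, hct])
    linarith

lemma adj_unique {A : Finset ℝ} {a b b' : ℝ} (h : Adj A a b) (h' : Adj A a b') : b = b' := by
  rcases h with ⟨ha, hb, hab, hnb⟩
  rcases h' with ⟨-, hb', hab', hnb'⟩
  by_contra hne
  rcases lt_or_gt_of_ne hne with hlt | hlt
  · exact hnb' b hb ⟨hab, hlt⟩
  · exact hnb b' hb' ⟨hab', hlt⟩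

lemma slope_step {fa fp fb a p b : ℝ} (h1 : a < p) (h2 : p < b)
    (h : (fp - fa)/(p - a) ≤ (fb - fp)/(b - p)) :
    (fb - fa)/(b - a) ≤ (fb - fp)/(b - p) ∧ (fp - fa)/(p - a) ≤ (fb - fa)/(b - a) := by
  rw [div_le_div_iff₀ (by linarith) (by linarith)] at h
  constructor
  · rw [div_le_div_iff₀ (by linarith) (by linarith)]; nlinarith
  · rw [div_le_div_iff₀ (by linarith) (by linarith)]; nlinarith

lemma slope_between {fx fp fy x p y s : ℝ} (hxp : x < p) (hpy : p < y)
    (h1 : s ≤ (fp - fx)/(p - x)) (h2 : s ≤ (fy - fp)/(y - p)) :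
    s ≤ (fy - fx)/(y - x) := by
  rw [le_div_iff₀ (by linarith)] at h1 h2 ⊢
  nlinarith

lemma slope_between' {fx fp fy x p y s : ℝ} (hxp : x < p) (hpy : p < y)
    (h1 : (fp - fx)/(p - x) ≤ s) (h2 : (fy - fp)/(y - p) ≤ s) :
    (fy - fx)/(y - x) ≤ s := by
  rw [div_le_iff₀ (by linarith)] at h1 h2 ⊢
  nlinarith
lemma mesh_slope_triple {A : Finset ℝ} {uu : ℝ → ℝ}
    (hconvA : ∀ a ∈ A, ∀ b ∈ A, ∀ c ∈ A, a < b → b < c →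
      (∀ p ∈ A, ¬(a < p ∧ p < b)) → (∀ p ∈ A, ¬(b < p ∧ p < c)) →
      (uu b - uu a) / (b - a) ≤ (uu c - uu b) / (c - b)) :
    ∀ n : ℕ, ∀ a ∈ A, ∀ b ∈ A, ∀ c ∈ A, a < b → b < c →
      (A.filter (fun p => a ≤ p ∧ p ≤ c)).card ≤ n →
      (uu b - uu a) / (b - a) ≤ (uu c - uu b) / (c - b) := by
  classical
  intro n
  induction n with
  | zero =>
    intro a ha b hb c hc hab hbc hcard
    exfalso
    have hmem : a ∈ A.filter (fun p => a ≤ p ∧ p ≤ c) := by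
      simp only [Finset.mem_filter]
      exact ⟨ha, le_refl a, (hab.trans hbc).le⟩
    have := Finset.card_pos.mpr ⟨a, hmem⟩
    omega
  | succ n ih =>
    intro a ha b hb c hc hab hbc hcard
    by_cases hP : ∃ p ∈ A, a < p ∧ p < b
    · obtain ⟨p, hp, hap, hpb⟩ := hP
      have hcard1 : (A.filter (fun q => a ≤ q ∧ q ≤ b)).card ≤ n := by
        have hss : A.filter (fun q => a ≤ q ∧ q ≤ b) ⊂ A.filter (fun q => a ≤ q ∧ q ≤ c) := by
          refine Finset.ssubset_iff_of_subset ?_ |>.mpr ⟨c, ?_, ?_⟩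
          · intro r hr; simp only [Finset.mem_filter] at hr ⊢
            exact ⟨hr.1, hr.2.1, by linarith [hr.2.2]⟩
          · simp only [Finset.mem_filter]; exact ⟨hc, (hab.trans hbc).le, le_refl c⟩
          · simp only [Finset.mem_filter]; push_neg; intro _ _; linarith
        have := Finset.card_lt_card hss
        omega
      have hcard2 : (A.filter (fun q => p ≤ q ∧ q ≤ c)).card ≤ n := by
        have hss : A.filter (fun q => p ≤ q ∧ q ≤ c) ⊂ A.filter (fun q => a ≤ q ∧ q ≤ c) := by
          refine Finset.ssubset_iff_of_subset ?_ |>.mpr ⟨a, ?_, ?_⟩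
          · intro r hr; simp only [Finset.mem_filter] at hr ⊢
            exact ⟨hr.1, by linarith [hr.2.1], hr.2.2⟩
          · simp only [Finset.mem_filter]; exact ⟨ha, le_refl a, (hab.trans hbc).le⟩
          · simp only [Finset.mem_filter]; push_neg; intro _ h'; linarith
        have := Finset.card_lt_card hss
        omega
      have h1 := ih a ha p hp b hb hap hpb hcard1
      have h2 := ih p hp b hb c hc hpb hbc hcard2
      exact le_trans (slope_step hap hpb h1).1 h2
    · by_cases hQ : ∃ q ∈ A, b < q ∧ q < c
      · obtain ⟨q, hq, hbq, hqc⟩ := hQ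
        have hcard1 : (A.filter (fun r => a ≤ r ∧ r ≤ q)).card ≤ n := by
          have hss : A.filter (fun r => a ≤ r ∧ r ≤ q) ⊂ A.filter (fun r => a ≤ r ∧ r ≤ c) := by
            refine Finset.ssubset_iff_of_subset ?_ |>.mpr ⟨c, ?_, ?_⟩
            · intro r hr; simp only [Finset.mem_filter] at hr ⊢
              exact ⟨hr.1, hr.2.1, by linarith [hr.2.2]⟩
            · simp only [Finset.mem_filter]; exact ⟨hc, (hab.trans hbc).le, le_refl c⟩
            · simp only [Finset.mem_filter]; push_neg; intro _ _; linarith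
          have := Finset.card_lt_card hss
          omega
        have hcard2 : (A.filter (fun r => b ≤ r ∧ r ≤ c)).card ≤ n := by
          have hss : A.filter (fun r => b ≤ r ∧ r ≤ c) ⊂ A.filter (fun r => a ≤ r ∧ r ≤ c) := by
            refine Finset.ssubset_iff_of_subset ?_ |>.mpr ⟨a, ?_, ?_⟩
            · intro r hr; simp only [Finset.mem_filter] at hr ⊢
              exact ⟨hr.1, by linarith [hr.2.1], hr.2.2⟩
            · simp only [Finset.mem_filter]; exact ⟨ha, le_refl a, (hab.trans hbc).le⟩
            · simp only [Finset.mem_filter]; push_neg; intro _ h'; linarith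
          have := Finset.card_lt_card hss
          omega
        have h1 := ih a ha b hb q hq hab hbq hcard1
        have h2 := ih b hb q hq c hc hbq hqc hcard2
        exact le_trans h1 (slope_step hbq hqc h2).2
      · push_neg at hP hQ
        exact hconvA a ha b hb c hc hab hbc
          (fun p hp => by rintro ⟨h1', h2'⟩; exact absurd h2' (by have := hP p hp h1'; linarith))
          (fun p hp => by rintro ⟨h1', h2'⟩; exact absurd h2' (by have := hQ p hp h1'; linarith))

lemma mesh_slope_triple' {A : Finset ℝ} {uu : ℝ → ℝ}
    (hconvA : ∀ a ∈ A, ∀ b ∈ A, ∀ c ∈ A, a < b → b < c →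
      (∀ p ∈ A, ¬(a < p ∧ p < b)) → (∀ p ∈ A, ¬(b < p ∧ p < c)) →
      (uu b - uu a) / (b - a) ≤ (uu c - uu b) / (c - b))
    {a b c : ℝ} (ha : a ∈ A) (hb : b ∈ A) (hc : c ∈ A) (hab : a < b) (hbc : b < c) :
    (uu b - uu a) / (b - a) ≤ (uu c - uu b) / (c - b) :=
  mesh_slope_triple hconvA _ a ha b hb c hc hab hbc le_rfl

lemma mesh_slope_mono {A : Finset ℝ} {uu : ℝ → ℝ}
    (hconvA : ∀ a ∈ A, ∀ b ∈ A, ∀ c ∈ A, a < b → b < c →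
      (∀ p ∈ A, ¬(a < p ∧ p < b)) → (∀ p ∈ A, ¬(b < p ∧ p < c)) →
      (uu b - uu a) / (b - a) ≤ (uu c - uu b) / (c - b))
    {a b c d : ℝ} (ha : a ∈ A) (hb : b ∈ A) (hc : c ∈ A) (hd : d ∈ A)
    (hab : a < b) (hbc : b ≤ c) (hcd : c < d) :
    (uu b - uu a) / (b - a) ≤ (uu d - uu c) / (d - c) := by
  rcases eq_or_lt_of_le hbc with rfl | hlt
  · exact mesh_slope_triple' hconvA ha hb hd hab hcd
  · exact le_trans (mesh_slope_triple' hconvA ha hb hc hab hlt)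
      (mesh_slope_triple' hconvA hb hc hd hlt hcd)
lemma cell_slope {A : Finset ℝ} {uu UU : ℝ → ℝ}
    (hval : ∀ p ∈ A, UU p = uu p)
    (haff : ∀ a b : ℝ, Adj A a b → ∃ m q : ℝ, ∀ t ∈ Icc a b, UU t = m * t + q)
    {a b : ℝ} (hadj : Adj A a b) {x y : ℝ} (hx : x ∈ Icc a b) (hy : y ∈ Icc a b)
    (hxy : x < y) :
    (UU y - UU x) / (y - x) = (uu b - uu a) / (b - a) := by
  obtain ⟨m, q, hmq⟩ := haff a b hadj
  have hab := hadj.2.2.1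
  have hua : uu a = m * a + q := by
    rw [← hval a hadj.1]; exact hmq a ⟨le_refl a, hab.le⟩
  have hub : uu b = m * b + q := by
    rw [← hval b hadj.2.1]; exact hmq b ⟨hab.le, le_refl b⟩
  rw [hmq x hx, hmq y hy, hua, hub]
  rw [div_eq_div_iff (by linarith) (by linarith)]
  ring

lemma slope_lower_base {A : Finset ℝ} {uu UU : ℝ → ℝ}
    (h0 : (0:ℝ) ∈ A) (h1 : (1:ℝ) ∈ A)
    (hconvA : ∀ a ∈ A, ∀ b ∈ A, ∀ c ∈ A, a < b → b < c →
      (∀ p ∈ A, ¬(a < p ∧ p < b)) → (∀ p ∈ A, ¬(b < p ∧ p < c)) →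
      (uu b - uu a) / (b - a) ≤ (uu c - uu b) / (c - b))
    (hval : ∀ p ∈ A, UU p = uu p)
    (haff : ∀ a b : ℝ, Adj A a b → ∃ m q : ℝ, ∀ t ∈ Icc a b, UU t = m * t + q)
    {x y : ℝ} (hx0 : 0 ≤ x) (hxy : x < y) (hy1 : y ≤ 1)
    (hno : ∀ p ∈ A, ¬(x < p ∧ p < y)) {c d : ℝ} (hcd : Adj A c d) (hcx : c ≤ x) :
    (uu d - uu c) / (d - c) ≤ (UU y - UU x) / (y - x) := by
  obtain ⟨a, b, hab, hax, hxb⟩ := adj_cell_exists h0 h1 hx0 (lt_of_lt_of_le hxy hy1)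
  have hyb : y ≤ b := by
    by_contra hby; push_neg at hby
    exact hno b hab.2.1 ⟨hxb, hby⟩
  have hslope : (UU y - UU x) / (y - x) = (uu b - uu a) / (b - a) :=
    cell_slope hval haff hab ⟨hax, hxb.le⟩ ⟨hax.trans hxy.le, hyb⟩ hxy
  rw [hslope]
  rcases lt_trichotomy c a with hca | hca | hca
  · have hda : d ≤ a := by
      by_contra hda; push_neg at hda
      exact hcd.2.2.2 a hab.1 ⟨hca, hda⟩
    exact mesh_slope_mono hconvA hcd.1 hcd.2.1 hab.1 hab.2.1 hcd.2.2.1 hda hab.2.2.1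
  · subst hca
    rw [adj_unique hcd hab]
  · exact absurd ⟨hca, lt_of_le_of_lt hcx hxb⟩ (hab.2.2.2 c hcd.1)

lemma slope_upper_base {A : Finset ℝ} {uu UU : ℝ → ℝ}
    (h0 : (0:ℝ) ∈ A) (h1 : (1:ℝ) ∈ A)
    (hconvA : ∀ a ∈ A, ∀ b ∈ A, ∀ c ∈ A, a < b → b < c →
      (∀ p ∈ A, ¬(a < p ∧ p < b)) → (∀ p ∈ A, ¬(b < p ∧ p < c)) →
      (uu b - uu a) / (b - a) ≤ (uu c - uu b) / (c - b))
    (hval : ∀ p ∈ A, UU p = uu p)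
    (haff : ∀ a b : ℝ, Adj A a b → ∃ m q : ℝ, ∀ t ∈ Icc a b, UU t = m * t + q)
    {x y : ℝ} (hx0 : 0 ≤ x) (hxy : x < y) (hy1 : y ≤ 1)
    (hno : ∀ p ∈ A, ¬(x < p ∧ p < y)) {c d : ℝ} (hcd : Adj A c d) (hyd : y ≤ d) :
    (UU y - UU x) / (y - x) ≤ (uu d - uu c) / (d - c) := by
  obtain ⟨a, b, hab, hax, hxb⟩ := adj_cell_exists h0 h1 hx0 (lt_of_lt_of_le hxy hy1)
  have hyb : y ≤ b := by
    by_contra hby; push_neg at hby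
    exact hno b hab.2.1 ⟨hxb, hby⟩
  have hslope : (UU y - UU x) / (y - x) = (uu b - uu a) / (b - a) :=
    cell_slope hval haff hab ⟨hax, hxb.le⟩ ⟨hax.trans hxy.le, hyb⟩ hxy
  rw [hslope]
  rcases lt_trichotomy c a with hca | hca | hca
  · exfalso
    have hda : d ≤ a := by
      by_contra hda; push_neg at hda
      exact hcd.2.2.2 a hab.1 ⟨hca, hda⟩
    have : a < d := lt_of_le_of_lt hax (lt_of_lt_of_le hxy hyd)
    linarith
  · subst hca
    rw [adj_unique hab hcd]
  · have hbc : b ≤ c := by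
      by_contra hbc; push_neg at hbc
      exact hab.2.2.2 c hcd.1 ⟨hca, hbc⟩
    exact mesh_slope_mono hconvA hab.1 hab.2.1 hcd.1 hcd.2.1 hab.2.2.1 hbc hcd.2.2.1

lemma slope_lower {A : Finset ℝ} {uu UU : ℝ → ℝ}
    (h0 : (0:ℝ) ∈ A) (h1 : (1:ℝ) ∈ A) (hQ : ∀ p ∈ A, p ∈ Icc (0:ℝ) 1)
    (hconvA : ∀ a ∈ A, ∀ b ∈ A, ∀ c ∈ A, a < b → b < c →
      (∀ p ∈ A, ¬(a < p ∧ p < b)) → (∀ p ∈ A, ¬(b < p ∧ p < c)) →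
      (uu b - uu a) / (b - a) ≤ (uu c - uu b) / (c - b))
    (hval : ∀ p ∈ A, UU p = uu p)
    (haff : ∀ a b : ℝ, Adj A a b → ∃ m q : ℝ, ∀ t ∈ Icc a b, UU t = m * t + q) :
    ∀ n : ℕ, ∀ x y : ℝ, 0 ≤ x → x < y → y ≤ 1 →
      (A.filter (fun p => x < p ∧ p < y)).card ≤ n →
      ∀ c d : ℝ, Adj A c d → c ≤ x →
      (uu d - uu c) / (d - c) ≤ (UU y - UU x) / (y - x) := by
  classical
  intro n
  induction n with
  | zero =>
    intro x y hx0 hxy hy1 hcard c d hcd hcx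
    refine slope_lower_base h0 h1 hconvA hval haff hx0 hxy hy1 ?_ hcd hcx
    intro p hp hpmem
    have : p ∈ A.filter (fun p => x < p ∧ p < y) := by
      simp only [Finset.mem_filter]; exact ⟨hp, hpmem⟩
    have := Finset.card_pos.mpr ⟨p, this⟩
    omega
  | succ n ih =>
    intro x y hx0 hxy hy1 hcard c d hcd hcx
    by_cases hP : ∃ p ∈ A, x < p ∧ p < y
    · obtain ⟨p, hp, hxp, hpy⟩ := hP
      have hcard1 : (A.filter (fun q => x < q ∧ q < p)).card ≤ n := by
        have hss : A.filter (fun q => x < q ∧ q < p) ⊂ A.filter (fun q => x < q ∧ q < y) := by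
          refine Finset.ssubset_iff_of_subset ?_ |>.mpr ⟨p, ?_, ?_⟩
          · intro r hr; simp only [Finset.mem_filter] at hr ⊢
            exact ⟨hr.1, hr.2.1, by linarith [hr.2.2]⟩
          · simp only [Finset.mem_filter]; exact ⟨hp, hxp, hpy⟩
          · simp only [Finset.mem_filter]; push_neg; intro _ _; linarith
        have := Finset.card_lt_card hss; omega
      have hcard2 : (A.filter (fun q => p < q ∧ q < y)).card ≤ n := by
        have hss : A.filter (fun q => p < q ∧ q < y) ⊂ A.filter (fun q => x < q ∧ q < y) := by
          refine Finset.ssubset_iff_of_subset ?_ |>.mpr ⟨p, ?_, ?_⟩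
          · intro r hr; simp only [Finset.mem_filter] at hr ⊢
            exact ⟨hr.1, by linarith [hr.2.1], hr.2.2⟩
          · simp only [Finset.mem_filter]; exact ⟨hp, hxp, hpy⟩
          · simp only [Finset.mem_filter]; push_neg; intro _ h'; linarith
        have := Finset.card_lt_card hss; omega
      have hp1 : p ≤ 1 := (hQ p hp).2
      have h1' := ih x p hx0 hxp hp1 hcard1 c d hcd hcx
      have h2' := ih p y (hx0.trans hxp.le) hpy hy1 hcard2 c d hcd (hcx.trans hxp.le)
      exact slope_between hxp hpy h1' h2'
    · push_neg at hP
      refine slope_lower_base h0 h1 hconvA hval haff hx0 hxy hy1 ?_ hcd hcx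
      intro p hp hpmem
      have := hP p hp hpmem.1
      linarith [hpmem.2]

lemma slope_upper {A : Finset ℝ} {uu UU : ℝ → ℝ}
    (h0 : (0:ℝ) ∈ A) (h1 : (1:ℝ) ∈ A) (hQ : ∀ p ∈ A, p ∈ Icc (0:ℝ) 1)
    (hconvA : ∀ a ∈ A, ∀ b ∈ A, ∀ c ∈ A, a < b → b < c →
      (∀ p ∈ A, ¬(a < p ∧ p < b)) → (∀ p ∈ A, ¬(b < p ∧ p < c)) →
      (uu b - uu a) / (b - a) ≤ (uu c - uu b) / (c - b))
    (hval : ∀ p ∈ A, UU p = uu p)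
    (haff : ∀ a b : ℝ, Adj A a b → ∃ m q : ℝ, ∀ t ∈ Icc a b, UU t = m * t + q) :
    ∀ n : ℕ, ∀ x y : ℝ, 0 ≤ x → x < y → y ≤ 1 →
      (A.filter (fun p => x < p ∧ p < y)).card ≤ n →
      ∀ c d : ℝ, Adj A c d → y ≤ d →
      (UU y - UU x) / (y - x) ≤ (uu d - uu c) / (d - c) := by
  classical
  intro n
  induction n with
  | zero =>
    intro x y hx0 hxy hy1 hcard c d hcd hyd
    refine slope_upper_base h0 h1 hconvA hval haff hx0 hxy hy1 ?_ hcd hyd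
    intro p hp hpmem
    have : p ∈ A.filter (fun p => x < p ∧ p < y) := by
      simp only [Finset.mem_filter]; exact ⟨hp, hpmem⟩
    have := Finset.card_pos.mpr ⟨p, this⟩
    omega
  | succ n ih =>
    intro x y hx0 hxy hy1 hcard c d hcd hyd
    by_cases hP : ∃ p ∈ A, x < p ∧ p < y
    · obtain ⟨p, hp, hxp, hpy⟩ := hP
      have hcard1 : (A.filter (fun q => x < q ∧ q < p)).card ≤ n := by
        have hss : A.filter (fun q => x < q ∧ q < p) ⊂ A.filter (fun q => x < q ∧ q < y) := by
          refine Finset.ssubset_iff_of_subset ?_ |>.mpr ⟨p, ?_, ?_⟩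
          · intro r hr; simp only [Finset.mem_filter] at hr ⊢
            exact ⟨hr.1, hr.2.1, by linarith [hr.2.2]⟩
          · simp only [Finset.mem_filter]; exact ⟨hp, hxp, hpy⟩
          · simp only [Finset.mem_filter]; push_neg; intro _ _; linarith
        have := Finset.card_lt_card hss; omega
      have hcard2 : (A.filter (fun q => p < q ∧ q < y)).card ≤ n := by
        have hss : A.filter (fun q => p < q ∧ q < y) ⊂ A.filter (fun q => x < q ∧ q < y) := by
          refine Finset.ssubset_iff_of_subset ?_ |>.mpr ⟨p, ?_, ?_⟩
          · intro r hr; simp only [Finset.mem_filter] at hr ⊢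
            exact ⟨hr.1, by linarith [hr.2.1], hr.2.2⟩
          · simp only [Finset.mem_filter]; exact ⟨hp, hxp, hpy⟩
          · simp only [Finset.mem_filter]; push_neg; intro _ h'; linarith
        have := Finset.card_lt_card hss; omega
      have hp1 : p ≤ 1 := (hQ p hp).2
      have h1' := ih x p hx0 hxp hp1 hcard1 c d hcd (by linarith)
      have h2' := ih p y (hx0.trans hxp.le) hpy hy1 hcard2 c d hcd hyd
      exact slope_between' hxp hpy h1' h2'
    · push_neg at hP
      refine slope_upper_base h0 h1 hconvA hval haff hx0 hxy hy1 ?_ hcd hyd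
      intro p hp hpmem
      have := hP p hp hpmem.1
      linarith [hpmem.2]
lemma U_convexOn {A : Finset ℝ} {uu UU : ℝ → ℝ}
    (h0 : (0:ℝ) ∈ A) (h1 : (1:ℝ) ∈ A) (hQ : ∀ p ∈ A, p ∈ Icc (0:ℝ) 1)
    (hconvA : ∀ a ∈ A, ∀ b ∈ A, ∀ c ∈ A, a < b → b < c →
      (∀ p ∈ A, ¬(a < p ∧ p < b)) → (∀ p ∈ A, ¬(b < p ∧ p < c)) →
      (uu b - uu a) / (b - a) ≤ (uu c - uu b) / (c - b))
    (hval : ∀ p ∈ A, UU p = uu p)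
    (haff : ∀ a b : ℝ, Adj A a b → ∃ m q : ℝ, ∀ t ∈ Icc a b, UU t = m * t + q) :
    ConvexOn ℝ (Icc (0:ℝ) 1) UU := by
  classical
  refine convexOn_of_slope_mono_adjacent (convex_Icc 0 1) ?_
  intro x y z hx hz hxy hyz
  have hy0 : (0:ℝ) ≤ y := hx.1.trans hxy.le
  have hy1 : y < 1 := lt_of_lt_of_le hyz hz.2
  obtain ⟨a, b, hab, hay, hyb⟩ := adj_cell_exists h0 h1 hy0 hy1
  have h1' := slope_upper h0 h1 hQ hconvA hval haff
    (A.filter (fun p => x < p ∧ p < y)).card x y hx.1 hxy (by linarith) le_rfl a b hab hyb.le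
  have h2' := slope_lower h0 h1 hQ hconvA hval haff
    (A.filter (fun p => y < p ∧ p < z)).card y z hy0 hyz hz.2 le_rfl a b hab hay
  linarith

lemma U_bdd {A : Finset ℝ} {uu UU : ℝ → ℝ} {M₀ : ℝ}
    (h0 : (0:ℝ) ∈ A) (h1 : (1:ℝ) ∈ A)
    (hval : ∀ p ∈ A, UU p = uu p)
    (haff : ∀ a b : ℝ, Adj A a b → ∃ m q : ℝ, ∀ t ∈ Icc a b, UU t = m * t + q)
    (hb : ∀ p ∈ A, |uu p| ≤ M₀) :
    ∀ x ∈ Icc (0:ℝ) 1, |UU x| ≤ M₀ := by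
  intro x hx
  rcases eq_or_lt_of_le hx.2 with heq | hlt
  · rw [heq, hval 1 h1]; exact hb 1 h1
  · obtain ⟨a, b, hab, hax, hxb⟩ := adj_cell_exists h0 h1 hx.1 hlt
    obtain ⟨m, q, hmq⟩ := haff a b hab
    have hab' := hab.2.2.1
    have hUx : UU x = m * x + q := hmq x ⟨hax, hxb.le⟩
    have hua : uu a = m * a + q := by
      rw [← hval a hab.1]; exact hmq a ⟨le_refl a, hab'.le⟩
    have hub : uu b = m * b + q := by
      rw [← hval b hab.2.1]; exact hmq b ⟨hab'.le, le_refl b⟩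
    have h1a := hb a hab.1
    have h1b := hb b hab.2.1
    rw [hua, abs_le] at h1a
    rw [hub, abs_le] at h1b
    rw [hUx, abs_le]
    have e1 : (-M₀) * (b - x) ≤ (m * a + q) * (b - x) :=
      mul_le_mul_of_nonneg_right h1a.1 (by linarith)
    have e2 : (-M₀) * (x - a) ≤ (m * b + q) * (x - a) :=
      mul_le_mul_of_nonneg_right h1b.1 (by linarith)
    have e3 : (m * a + q) * (b - x) ≤ M₀ * (b - x) :=
      mul_le_mul_of_nonneg_right h1a.2 (by linarith)
    have e4 : (m * b + q) * (x - a) ≤ M₀ * (x - a) :=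
      mul_le_mul_of_nonneg_right h1b.2 (by linarith)
    have key : (m * x + q) * (b - a) = (m * a + q) * (b - x) + (m * b + q) * (x - a) := by
      ring
    constructor
    · have : (-M₀) * (b - a) ≤ (m * x + q) * (b - a) := by nlinarith
      have hba : (0:ℝ) < b - a := by linarith
      nlinarith
    · have : (m * x + q) * (b - a) ≤ M₀ * (b - a) := by nlinarith
      have hba : (0:ℝ) < b - a := by linarith
      nlinarith

set_option maxHeartbeats 1000000

/-- Given a sequence of nested subdivisions `M k` of `[0,1]` with maximal
steps `h k ↓ 0`, and discrete functions `u_ k` on `M k` satisfying the discrete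
convexity inequalities and uniformly bounded by `M₀`, with piecewise linear extensions
`U k`, there is a subsequence of `(U k)` converging to a continuous convex function `u`
on `[0,1]`, uniformly on every compact subset of `(0,1)`. -/
theorem stmt_3
    (h : ℕ → ℝ) (hpos : ∀ k, 0 < h k) (hanti : StrictAnti h)
    (hlim : Tendsto h atTop (nhds 0))
    (M : ℕ → Finset ℝ)
    (hM0 : ∀ k, (0 : ℝ) ∈ M k) (hM1 : ∀ k, (1 : ℝ) ∈ M k)
    (hMQ : ∀ k, ∀ p ∈ M k, p ∈ Icc (0 : ℝ) 1)
    (hstep : ∀ k, ∀ a ∈ M k, ∀ b ∈ M k, a < b →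
      (∀ c ∈ M k, ¬(a < c ∧ c < b)) → b - a ≤ h k)
    (hnested : ∀ k l, k ≤ l → M k ⊆ M l)
    (M₀ : ℝ) (hM₀ : 0 < M₀)
    (u_ : ℕ → ℝ → ℝ)
    (hconv : ∀ k, ∀ a ∈ M k, ∀ b ∈ M k, ∀ c ∈ M k, a < b → b < c →
      (∀ p ∈ M k, ¬(a < p ∧ p < b)) → (∀ p ∈ M k, ¬(b < p ∧ p < c)) →
      (u_ k b - u_ k a) / (b - a) ≤ (u_ k c - u_ k b) / (c - b))
    (hbdd : ∀ k, ∀ p ∈ M k, |u_ k p| ≤ M₀)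
    (U : ℕ → ℝ → ℝ)
    (hUmesh : ∀ k, ∀ p ∈ M k, U k p = u_ k p)
    (hUaff : ∀ k, ∀ a ∈ M k, ∀ b ∈ M k, a < b →
      (∀ c ∈ M k, ¬(a < c ∧ c < b)) →
      ∃ m q : ℝ, ∀ t ∈ Icc a b, U k t = m * t + q) :
    ∃ u : ℝ → ℝ, ∃ φ : ℕ → ℕ, StrictMono φ ∧
      ContinuousOn u (Icc (0 : ℝ) 1) ∧ ConvexOn ℝ (Icc (0 : ℝ) 1) u ∧
      ∀ K : Set ℝ, K ⊆ Ioo (0 : ℝ) 1 → IsCompact K →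
        TendstoUniformlyOn (fun j => U (φ j)) u atTop K := by
  classical
  have haff' : ∀ k, ∀ a b : ℝ, Adj (M k) a b →
      ∃ m q : ℝ, ∀ t ∈ Icc a b, U k t = m * t + q :=
    fun k a b hadj => hUaff k a hadj.1 b hadj.2.1 hadj.2.2.1 hadj.2.2.2
  have hUconv : ∀ k, ConvexOn ℝ (Icc (0:ℝ) 1) (U k) := fun k =>
    U_convexOn (hM0 k) (hM1 k) (hMQ k) (hconv k) (hUmesh k) (haff' k)
  have hUbd : ∀ k, ∀ x ∈ Icc (0:ℝ) 1, |U k x| ≤ M₀ := fun k =>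
    U_bdd (hM0 k) (hM1 k) (hUmesh k) (haff' k) (hbdd k)
  -- uniform Lipschitz bound on [δ, 1-δ]
  have hLip : ∀ k : ℕ, ∀ δ : ℝ, 0 < δ → δ ≤ 1/2 →
      ∀ x ∈ Icc δ (1-δ), ∀ y ∈ Icc δ (1-δ), |U k x - U k y| ≤ 2*M₀/δ * |x - y| := by
    intro k δ hδ0 hδ2
    have key : ∀ x ∈ Icc δ (1-δ), ∀ y ∈ Icc δ (1-δ), x < y →
        |U k x - U k y| ≤ 2*M₀/δ * |x - y| := by
      intro x hx y hy hxy
      have hx01 : x ∈ Icc (0:ℝ) 1 := ⟨by linarith [hx.1], by linarith [hx.2]⟩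
      have hy01 : y ∈ Icc (0:ℝ) 1 := ⟨by linarith [hy.1], by linarith [hy.2]⟩
      have h01 : (0:ℝ) ∈ Icc (0:ℝ) 1 := by norm_num
      have h11 : (1:ℝ) ∈ Icc (0:ℝ) 1 := by norm_num
      have hx0 : (0:ℝ) < x := lt_of_lt_of_le hδ0 hx.1
      have hy1 : y < 1 := by linarith [hy.2]
      have hs1 := (hUconv k).slope_mono_adjacent h01 hy01 hx0 hxy
      have hs2 := (hUconv k).slope_mono_adjacent hx01 h11 hxy hy1
      have hb0 := hUbd k 0 h01
      have hb1 := hUbd k 1 h11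
      rw [abs_le] at hb0 hb1
      have hδx : δ ≤ x := hx.1
      have hδ1y : δ ≤ 1 - y := by linarith [hy.2]
      have hub : (U k y - U k x)/(y-x) ≤ 2*M₀/δ := by
        refine le_trans hs2 ?_
        have hby := hUbd k y hy01; rw [abs_le] at hby
        rw [div_le_div_iff₀ (by linarith) hδ0]
        nlinarith
      have hlb : -(2*M₀)/δ ≤ (U k y - U k x)/(y-x) := by
        refine le_trans ?_ hs1
        have hbx := hUbd k x hx01; rw [abs_le] at hbx
        rw [div_le_div_iff₀ hδ0 (by linarith : (0:ℝ) < x - 0)]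
        nlinarith
      have habs : |x - y| = y - x := by
        rw [abs_sub_comm]; exact abs_of_pos (by linarith)
      rw [abs_sub_comm, habs, abs_le]
      have h1 : U k y - U k x ≤ 2*M₀/δ * (y - x) := by
        rw [div_le_iff₀ (by linarith : (0:ℝ) < y - x)] at hub; linarith
      have h2 : -(2*M₀)/δ * (y - x) ≤ U k y - U k x := by
        rw [le_div_iff₀ (by linarith : (0:ℝ) < y - x)] at hlb; linarith
      constructor
      · have : -(2*M₀)/δ * (y-x) = -(2*M₀/δ * (y-x)) := by ring
        rw [this] at h2; linarith
      · linarith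
    intro x hx y hy
    rcases lt_trichotomy x y with hlt | rfl | hgt
    · exact key x hx y hy hlt
    · simp
    · rw [abs_sub_comm, abs_sub_comm x y]
      exact key y hy x hx hgt
  -- countable union of meshes and diagonal extraction via compactness of a product
  set D : Set ℝ := ⋃ k, (M k : Set ℝ) with hD
  have hDsub : ∀ p ∈ D, p ∈ Icc (0:ℝ) 1 := by
    intro p hp
    rw [hD, mem_iUnion] at hp
    obtain ⟨k, hk⟩ := hp
    exact hMQ k p hk
  have hDc : D.Countable := countable_iUnion fun k => (M k).countable_toSet
  haveI : Countable D := hDc.to_subtype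
  have hTc : IsCompact (Set.pi univ (fun _ : D => Icc (-M₀) M₀)) :=
    isCompact_univ_pi fun _ => isCompact_Icc
  have hFmem : ∀ k, (fun p : D => U k (p:ℝ)) ∈ Set.pi univ (fun _ : D => Icc (-M₀) M₀) := by
    intro k p _
    have := hUbd k p (hDsub p p.2)
    rw [abs_le] at this
    exact ⟨this.1, this.2⟩
  obtain ⟨g, hgT, φ, hφ, hgtend⟩ := hTc.tendsto_subseq hFmem
  have hptD : ∀ p : D, Tendsto (fun j => U (φ j) (p:ℝ)) atTop (𝓝 (g p)) := by
    rw [tendsto_pi_nhds] at hgtend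
    intro p
    exact hgtend p
  -- uniform Cauchy property on [δ, 1-δ]
  have hUC : ∀ δ : ℝ, 0 < δ → δ ≤ 1/2 →
      UniformCauchySeqOn (fun j => U (φ j)) atTop (Icc δ (1-δ)) := by
    intro δ hδ0 hδ2
    rw [Metric.uniformCauchySeqOn_iff]
    intro ε hε
    have hεδ : 0 < min (δ/2) (ε*δ/(24*M₀)) := lt_min (by linarith) (by positivity)
    obtain ⟨k₀, hk₀⟩ : ∃ k₀, h k₀ < min (δ/2) (ε*δ/(24*M₀)) :=
      (hlim.eventually (gt_mem_nhds hεδ)).exists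
    have hk1 : h k₀ < δ/2 := lt_of_lt_of_le hk₀ (min_le_left _ _)
    have hk2 : h k₀ < ε*δ/(24*M₀) := lt_of_lt_of_le hk₀ (min_le_right _ _)
    have hmemD : ∀ p ∈ M k₀, p ∈ D := by
      intro p hp
      rw [hD, mem_iUnion]
      exact ⟨k₀, hp⟩
    have hev : ∀ᶠ i in atTop, ∀ p ∈ M k₀, ∀ hp : p ∈ D,
        |U (φ i) p - g ⟨p, hp⟩| < ε/6 := by
      rw [Finset.eventually_all]
      intro p hp
      have hpD : p ∈ D := hmemD p hp
      have := (Metric.tendsto_nhds.mp (hptD ⟨p, hpD⟩)) (ε/6) (by positivity)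
      filter_upwards [this] with i hi hp'
      have : (⟨p, hp'⟩ : D) = ⟨p, hpD⟩ := Subtype.ext rfl
      rw [this]
      rw [Real.dist_eq] at hi
      exact hi
    obtain ⟨N, hN⟩ := eventually_atTop.mp hev
    refine ⟨N, fun m hm n hn x hx => ?_⟩
    have hx01 : x ∈ Icc (0:ℝ) 1 := ⟨by linarith [hx.1], by linarith [hx.2]⟩
    have hxlt1 : x < 1 := by linarith [hx.2]
    obtain ⟨a, b, hab, hax, hxb⟩ := adj_cell_exists (hM0 k₀) (hM1 k₀) hx01.1 hxlt1
    have hba : b - a ≤ h k₀ := hstep k₀ a hab.1 b hab.2.1 hab.2.2.1 hab.2.2.2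
    have hxa : x - a ≤ h k₀ := by linarith
    have haD : a ∈ D := hmemD a hab.1
    have haΔ : a ∈ Icc (δ/2) (1-δ/2) := by
      constructor
      · linarith [hx.1]
      · linarith [hx.2]
    have hxΔ : x ∈ Icc (δ/2) (1-δ/2) := ⟨by linarith [hx.1], by linarith [hx.2]⟩
    have hδ2' : (0:ℝ) < δ/2 := by linarith
    have hδ2'' : δ/2 ≤ 1/2 := by linarith
    have hLm := hLip (φ m) (δ/2) hδ2' hδ2'' x hxΔ a haΔ
    have hLn := hLip (φ n) (δ/2) hδ2' hδ2'' x hxΔ a haΔ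
    have habs : |x - a| = x - a := abs_of_nonneg (by linarith)
    have hC6 : 2*M₀/(δ/2) * |x - a| < ε/6 := by
      rw [habs]
      have hpos : (0:ℝ) < 2*M₀/(δ/2) := by positivity
      calc 2*M₀/(δ/2) * (x - a) ≤ 2*M₀/(δ/2) * h k₀ :=
            mul_le_mul_of_nonneg_left hxa hpos.le
        _ < 2*M₀/(δ/2) * (ε*δ/(24*M₀)) := by
            exact mul_lt_mul_of_pos_left hk2 hpos
        _ = ε/6 := by
            field_simp
            ring
    have hLn' : |U (φ n) a - U (φ n) x| ≤ 2*M₀/(δ/2) * |x - a| := by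
      rw [abs_sub_comm]; exact hLn
    have hga := hN m hm a hab.1 haD
    have hgb := hN n hn a hab.1 haD
    rw [Real.dist_eq]
    have tri : |U (φ m) x - U (φ n) x| ≤
        |U (φ m) x - U (φ m) a| + |U (φ m) a - g ⟨a, haD⟩| +
        (|U (φ n) a - g ⟨a, haD⟩| + |U (φ n) a - U (φ n) x|) := by
      have e1 := abs_sub_le (U (φ m) x) (U (φ m) a) (U (φ n) x)
      have e2 := abs_sub_le (U (φ m) a) (g ⟨a, haD⟩) (U (φ n) a)
      have e3 : |g ⟨a, haD⟩ - U (φ n) a| = |U (φ n) a - g ⟨a, haD⟩| := abs_sub_comm _ _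
      have e4 : |U (φ m) a - U (φ n) x| ≤ |U (φ m) a - g ⟨a, haD⟩| +
          (|U (φ n) a - g ⟨a, haD⟩| + |U (φ n) a - U (φ n) x|) := by
        have e5 := abs_sub_le (U (φ m) a) (U (φ n) a) (U (φ n) x)
        have e6 := abs_sub_le (U (φ m) a) (g ⟨a, haD⟩) (U (φ n) a)
        rw [e3] at e6
        linarith
      linarith
    linarith
  -- pointwise convergence on the open interval
  have hptIoo : ∀ x : ℝ, x ∈ Ioo (0:ℝ) 1 → ∃ L, Tendsto (fun j => U (φ j) x) atTop (𝓝 L) := by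
    intro x hx
    set δ := min x (1-x) with hδdef
    have hδ0 : 0 < δ := lt_min hx.1 (by linarith [hx.2])
    have hδ2 : δ ≤ 1/2 := by
      have h1 := min_le_left x (1-x)
      have h2 := min_le_right x (1-x)
      rw [← hδdef] at h1 h2
      linarith
    have hxmem : x ∈ Icc δ (1-δ) := by
      constructor
      · exact min_le_left _ _
      · have := min_le_right x (1-x); linarith
    exact cauchySeq_tendsto_of_complete ((hUC δ hδ0 hδ2).cauchySeq hxmem)
  have hvex : ∀ x : ℝ, ∃ L : ℝ, x ∈ Ioo (0:ℝ) 1 → Tendsto (fun j => U (φ j) x) atTop (𝓝 L) := by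
    intro x
    by_cases hx : x ∈ Ioo (0:ℝ) 1
    · obtain ⟨L, hL⟩ := hptIoo x hx
      exact ⟨L, fun _ => hL⟩
    · exact ⟨0, fun hx' => absurd hx' hx⟩
  choose v hv using hvex
  have hvbd : ∀ x ∈ Ioo (0:ℝ) 1, |v x| ≤ M₀ := by
    intro x hx
    exact le_of_tendsto (hv x hx).abs
      (Eventually.of_forall fun j => hUbd (φ j) x (Ioo_subset_Icc_self hx))
  have hvconv : ConvexOn ℝ (Ioo (0:ℝ) 1) v := by
    refine ⟨convex_Ioo 0 1, ?_⟩
    intro x hx y hy a b ha hb hab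
    have hmem := (convex_Ioo (0:ℝ) 1) hx hy ha hb hab
    have hlim1 := hv _ hmem
    have hlim2 := ((hv x hx).const_mul a).add ((hv y hy).const_mul b)
    refine le_of_tendsto_of_tendsto' hlim1 hlim2 (fun j => ?_)
    have := (hUconv (φ j)).2 (Ioo_subset_Icc_self hx) (Ioo_subset_Icc_self hy) ha hb hab
    simpa [smul_eq_mul] using this
  have hvLip : ∀ δ : ℝ, 0 < δ → δ ≤ 1/2 →
      ∀ x ∈ Icc δ (1-δ), ∀ y ∈ Icc δ (1-δ), |v x - v y| ≤ 2*M₀/δ * |x - y| := by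
    intro δ hδ0 hδ2 x hx y hy
    have hxI : x ∈ Ioo (0:ℝ) 1 := ⟨lt_of_lt_of_le hδ0 hx.1, by linarith [hx.2]⟩
    have hyI : y ∈ Ioo (0:ℝ) 1 := ⟨lt_of_lt_of_le hδ0 hy.1, by linarith [hy.2]⟩
    exact le_of_tendsto (((hv x hxI).sub (hv y hyI)).abs)
      (Eventually.of_forall fun j => hLip (φ j) δ hδ0 hδ2 x hx y hy)
  have hvcont : ∀ x ∈ Ioo (0:ℝ) 1, ContinuousAt v x := by
    intro x hx
    set δ := min x (1-x) / 2 with hδdef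
    have hm1 := min_le_left x (1-x)
    have hm2 := min_le_right x (1-x)
    have hmin0 : 0 < min x (1-x) := lt_min hx.1 (by linarith [hx.2])
    have hδ0 : 0 < δ := by rw [hδdef]; linarith
    have hδ2 : δ ≤ 1/2 := by rw [hδdef]; linarith
    have hxmem : x ∈ Ioo δ (1-δ) := by
      constructor
      · rw [hδdef]; linarith
      · rw [hδdef]; linarith
    have hLOW : LipschitzOnWith (Real.toNNReal (2*M₀/δ)) v (Icc δ (1-δ)) := by
      rw [lipschitzOnWith_iff_dist_le_mul]
      intro p hp q hq
      rw [Real.dist_eq, Real.dist_eq, Real.coe_toNNReal _ (by positivity)]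
      exact hvLip δ hδ0 hδ2 p hp q hq
    exact hLOW.continuousOn.continuousAt (Icc_mem_nhds hxmem.1 hxmem.2)
  -- limit at the left endpoint
  have hcI : (1/2 : ℝ) ∈ Ioo (0:ℝ) 1 := by norm_num
  set w : ℝ → ℝ := fun x => (v (1/2) - v x)/(1/2 - x) with hwdef
  have hwmono : MonotoneOn w (Ioo (0:ℝ) (1/4)) := by
    intro x1 hx1 x2 hx2 h12
    rcases eq_or_lt_of_le h12 with rfl | hlt
    · exact le_rfl
    · have h1I : x1 ∈ Ioo (0:ℝ) 1 := ⟨hx1.1, by linarith [hx1.2]⟩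
      have h2I : x2 ∈ Ioo (0:ℝ) 1 := ⟨hx2.1, by linarith [hx2.2]⟩
      have h2c : x2 < 1/2 := by linarith [hx2.2]
      have hs := hvconv.slope_mono_adjacent h1I hcI hlt h2c
      exact (slope_step hlt h2c hs).1
  have hwbdd : BddBelow (w '' Ioo (0:ℝ) (1/4)) := by
    refine ⟨-(8*M₀), ?_⟩
    rintro _ ⟨x, hx, rfl⟩
    have hxI : x ∈ Ioo (0:ℝ) 1 := ⟨hx.1, by linarith [hx.2]⟩
    have h1 := hvbd x hxI
    have h2 := hvbd (1/2) hcI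
    rw [abs_le] at h1 h2
    have hpos : (0:ℝ) < 1/2 - x := by linarith [hx.2]
    rw [hwdef]
    simp only
    rw [le_div_iff₀ hpos]
    nlinarith [hx.2, hx.1]
  have hW := MonotoneOn.tendsto_nhdsWithin_Ioo_right
    (⟨1/8, by norm_num⟩ : (Ioo (0:ℝ) (1/4)).Nonempty) hwmono hwbdd
  set Aval : ℝ := v (1/2) - sInf (w '' Ioo (0:ℝ) (1/4)) * (1/2) with hAdef
  have hAtend : Tendsto v (𝓝[>] (0:ℝ)) (𝓝 Aval) := by
    have h2 : Tendsto (fun x : ℝ => 1/2 - x) (𝓝[>] (0:ℝ)) (𝓝 (1/2)) := by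
      have := (tendsto_const_nhds (x := (1/2:ℝ)) (f := 𝓝 (0:ℝ))).sub tendsto_id
      rw [sub_zero] at this
      exact this.mono_left nhdsWithin_le_nhds
    have h1 : Tendsto (fun x => v (1/2) - w x * (1/2 - x)) (𝓝[>] (0:ℝ)) (𝓝 Aval) := by
      rw [hAdef]
      exact tendsto_const_nhds.sub (hW.mul h2)
    refine h1.congr' ?_
    filter_upwards [Ioo_mem_nhdsGT_of_mem
      (show (0:ℝ) ∈ Ico (0:ℝ) (1/4) by norm_num)] with x hx
    have hne : (1/2 : ℝ) - x ≠ 0 := by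
      have := hx.2; intro hcon; rw [sub_eq_zero] at hcon; rw [← hcon] at this; norm_num at this
    rw [hwdef]
    simp only
    rw [div_mul_cancel₀ _ hne]
    ring
  -- limit at the right endpoint
  set w' : ℝ → ℝ := fun x => (v x - v (1/2))/(x - 1/2) with hw'def
  have hw'mono : MonotoneOn w' (Ioo (3/4 : ℝ) 1) := by
    intro x1 hx1 x2 hx2 h12
    rcases eq_or_lt_of_le h12 with rfl | hlt
    · exact le_rfl
    · have h1I : x1 ∈ Ioo (0:ℝ) 1 := ⟨by linarith [hx1.1], hx1.2⟩
      have h2I : x2 ∈ Ioo (0:ℝ) 1 := ⟨by linarith [hx2.1], hx2.2⟩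
      have hc1 : (1/2 : ℝ) < x1 := by linarith [hx1.1]
      have hs := hvconv.slope_mono_adjacent hcI h2I hc1 hlt
      exact (slope_step hc1 hlt hs).2
  have hw'bdd : BddAbove (w' '' Ioo (3/4 : ℝ) 1) := by
    refine ⟨8*M₀, ?_⟩
    rintro _ ⟨x, hx, rfl⟩
    have hxI : x ∈ Ioo (0:ℝ) 1 := ⟨by linarith [hx.1], hx.2⟩
    have h1 := hvbd x hxI
    have h2 := hvbd (1/2) hcI
    rw [abs_le] at h1 h2
    have hpos : (0:ℝ) < x - 1/2 := by linarith [hx.1]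
    rw [hw'def]
    simp only
    rw [div_le_iff₀ hpos]
    nlinarith [hx.1, hx.2]
  have hW' := MonotoneOn.tendsto_nhdsWithin_Ioo_left
    (⟨7/8, by norm_num⟩ : (Ioo (3/4 : ℝ) 1).Nonempty) hw'mono hw'bdd
  set Bval : ℝ := v (1/2) + sSup (w' '' Ioo (3/4 : ℝ) 1) * (1/2) with hBdef
  have hBtend : Tendsto v (𝓝[<] (1:ℝ)) (𝓝 Bval) := by
    have h2 : Tendsto (fun x : ℝ => x - 1/2) (𝓝[<] (1:ℝ)) (𝓝 (1/2)) := by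
      have := (tendsto_id (x := 𝓝 (1:ℝ))).sub (tendsto_const_nhds (x := (1/2:ℝ)))
      norm_num at this
      exact this.mono_left nhdsWithin_le_nhds
    have h1 : Tendsto (fun x => v (1/2) + w' x * (x - 1/2)) (𝓝[<] (1:ℝ)) (𝓝 Bval) := by
      rw [hBdef]
      exact tendsto_const_nhds.add (hW'.mul h2)
    refine h1.congr' ?_
    filter_upwards [Ioo_mem_nhdsLT_of_mem
      (show (1:ℝ) ∈ Ioc (3/4:ℝ) 1 by norm_num)] with x hx
    have hne : x - (1/2 : ℝ) ≠ 0 := by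
      have := hx.1; intro hcon; rw [sub_eq_zero] at hcon; rw [hcon] at this; norm_num at this
    rw [hw'def]
    simp only
    rw [div_mul_cancel₀ _ hne]
    ring
  -- definition of the limit function
  set u : ℝ → ℝ := fun x => if x ≤ 0 then Aval else if 1 ≤ x then Bval else v x with hudef
  have huv : ∀ x ∈ Ioo (0:ℝ) 1, u x = v x := by
    intro x hx
    rw [hudef]
    simp only
    rw [if_neg (not_le.mpr hx.1), if_neg (not_le.mpr hx.2)]
  have hu0 : u 0 = Aval := by rw [hudef]; norm_num
  have hu1 : u 1 = Bval := by rw [hudef]; norm_num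
  -- continuity
  have hucont : ContinuousOn u (Icc (0:ℝ) 1) := by
    intro x hx
    rcases eq_or_lt_of_le hx.1 with h0x | h0x
    · -- x = 0
      rw [← h0x]
      have hIcc : Icc (0:ℝ) 1 = insert 0 (Ioc 0 1) := (Set.Ioc_insert_left (by norm_num)).symm
      have h1' : Tendsto u (𝓝[Ioc (0:ℝ) 1] 0) (𝓝 Aval) := by
        have hmono : 𝓝[Ioc (0:ℝ) 1] (0:ℝ) ≤ 𝓝[>] (0:ℝ) :=
          nhdsWithin_mono _ Ioc_subset_Ioi_self
        refine (hAtend.mono_left hmono).congr' ?_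
        filter_upwards [self_mem_nhdsWithin,
          mem_nhdsWithin_of_mem_nhds (Iio_mem_nhds (by norm_num : (0:ℝ) < 1))] with y hy hy1
        exact (huv y ⟨hy.1, hy1⟩).symm
      show Tendsto u (𝓝[Icc (0:ℝ) 1] 0) (𝓝 (u 0))
      rw [hu0, hIcc, nhdsWithin_insert, tendsto_sup]
      exact ⟨hu0 ▸ tendsto_pure_nhds u 0, h1'⟩
    rcases eq_or_lt_of_le hx.2 with h1x | h1x
    · -- x = 1
      rw [h1x]
      have hIcc : Icc (0:ℝ) 1 = insert 1 (Ico 0 1) := (Set.Ico_insert_right (by norm_num)).symm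
      have h1' : Tendsto u (𝓝[Ico (0:ℝ) 1] 1) (𝓝 Bval) := by
        have hmono : 𝓝[Ico (0:ℝ) 1] (1:ℝ) ≤ 𝓝[<] (1:ℝ) :=
          nhdsWithin_mono _ Ico_subset_Iio_self
        refine (hBtend.mono_left hmono).congr' ?_
        filter_upwards [self_mem_nhdsWithin,
          mem_nhdsWithin_of_mem_nhds (Ioi_mem_nhds (by norm_num : (0:ℝ) < 1))] with y hy hy0
        exact (huv y ⟨hy0, hy.2⟩).symm
      show Tendsto u (𝓝[Icc (0:ℝ) 1] 1) (𝓝 (u 1))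
      rw [hu1, hIcc, nhdsWithin_insert, tendsto_sup]
      exact ⟨hu1 ▸ tendsto_pure_nhds u 1, h1'⟩
    · -- interior
      have hxI : x ∈ Ioo (0:ℝ) 1 := ⟨h0x, h1x⟩
      have heq : v =ᶠ[𝓝 x] u := by
        filter_upwards [Ioo_mem_nhds h0x h1x] with y hy
        exact (huv y hy).symm
      exact ((hvcont x hxI).congr heq).continuousWithinAt
  -- convexity
  have key : ∀ x y a b : ℝ, x ∈ Icc (0:ℝ) 1 → y ∈ Icc (0:ℝ) 1 → x < y →
      0 < a → 0 < b → a + b = 1 → u (a*x + b*y) ≤ a * u x + b * u y := by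
    intro x y a b hx hy hxy ha hb hab
    have hb1 : b < 1 := by linarith
    have ha1 : a < 1 := by linarith
    have hP : a*x + b*y ∈ Ioo (0:ℝ) 1 := by
      constructor
      · nlinarith [mul_pos hb (sub_pos.mpr hxy), hx.1]
      · nlinarith [mul_pos ha (sub_pos.mpr hxy), hy.2]
    have hmapx : Tendsto (fun ε : ℝ => x + b*ε) (𝓝[>] (0:ℝ)) (𝓝[Icc (0:ℝ) 1] x) := by
      apply tendsto_nhdsWithin_of_tendsto_nhds_of_eventually_within
      · have htend : Tendsto (fun ε : ℝ => x + b*ε) (𝓝 0) (𝓝 (x + b*0)) :=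
          tendsto_const_nhds.add (tendsto_id.const_mul b)
        rw [mul_zero, add_zero] at htend
        exact htend.mono_left nhdsWithin_le_nhds
      · filter_upwards [Ioo_mem_nhdsGT_of_mem
          (show (0:ℝ) ∈ Ico (0:ℝ) (y-x) from ⟨le_rfl, by linarith⟩)] with ε hε
        constructor
        · nlinarith [hx.1, mul_pos hb hε.1]
        · nlinarith [hy.2, hε.2, mul_pos hb hε.1]
    have hmapy : Tendsto (fun ε : ℝ => y - a*ε) (𝓝[>] (0:ℝ)) (𝓝[Icc (0:ℝ) 1] y) := by
      apply tendsto_nhdsWithin_of_tendsto_nhds_of_eventually_within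
      · have htend : Tendsto (fun ε : ℝ => y - a*ε) (𝓝 0) (𝓝 (y - a*0)) :=
          tendsto_const_nhds.sub (tendsto_id.const_mul a)
        rw [mul_zero, sub_zero] at htend
        exact htend.mono_left nhdsWithin_le_nhds
      · filter_upwards [Ioo_mem_nhdsGT_of_mem
          (show (0:ℝ) ∈ Ico (0:ℝ) (y-x) from ⟨le_rfl, by linarith⟩)] with ε hε
        constructor
        · nlinarith [hx.1, mul_pos ha hε.1, hε.2]
        · nlinarith [hy.2, mul_pos ha hε.1]
    have htx : Tendsto (fun ε : ℝ => u (x + b*ε)) (𝓝[>] (0:ℝ)) (𝓝 (u x)) :=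
      (hucont x hx).tendsto.comp hmapx
    have hty : Tendsto (fun ε : ℝ => u (y - a*ε)) (𝓝[>] (0:ℝ)) (𝓝 (u y)) :=
      (hucont y hy).tendsto.comp hmapy
    have hRHS : Tendsto (fun ε : ℝ => a * u (x + b*ε) + b * u (y - a*ε))
        (𝓝[>] (0:ℝ)) (𝓝 (a * u x + b * u y)) :=
      (htx.const_mul a).add (hty.const_mul b)
    have hev : ∀ᶠ ε in 𝓝[>] (0:ℝ), u (a*x + b*y) ≤ a * u (x + b*ε) + b * u (y - a*ε) := by
      filter_upwards [Ioo_mem_nhdsGT_of_mem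
        (show (0:ℝ) ∈ Ico (0:ℝ) (y-x) from ⟨le_rfl, by linarith⟩)] with ε hε
      have hxε : x + b*ε ∈ Ioo (0:ℝ) 1 := by
        constructor
        · nlinarith [hx.1, mul_pos hb hε.1]
        · nlinarith [hy.2, hε.2, mul_pos hb hε.1]
      have hyε : y - a*ε ∈ Ioo (0:ℝ) 1 := by
        constructor
        · nlinarith [hx.1, mul_pos ha hε.1, hε.2]
        · nlinarith [hy.2, mul_pos ha hε.1]
      have hcomb : a*(x + b*ε) + b*(y - a*ε) = a*x + b*y := by ring
      have hcc := hvconv.2 hxε hyε ha.le hb.le hab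
      simp only [smul_eq_mul] at hcc
      rw [hcomb] at hcc
      rw [huv _ hP, huv _ hxε, huv _ hyε]
      exact hcc
    exact le_of_tendsto_of_tendsto tendsto_const_nhds hRHS hev
  have huconv : ConvexOn ℝ (Icc (0:ℝ) 1) u := by
    refine ⟨convex_Icc 0 1, ?_⟩
    intro x hx y hy a b ha hb hab
    simp only [smul_eq_mul]
    rcases eq_or_lt_of_le ha with rfl | ha'
    · have hb1 : b = 1 := by linarith
      subst hb1
      simp
    rcases eq_or_lt_of_le hb with rfl | hb'
    · have ha1 : a = 1 := by linarith
      subst ha1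
      simp
    rcases lt_trichotomy x y with hlt | rfl | hgt
    · exact key x y a b hx hy hlt ha' hb' hab
    · have hxx : a*x + b*x = x := by rw [← add_mul, hab, one_mul]
      rw [hxx, ← add_mul, hab, one_mul]
    · have hk := key y x b a hy hx hgt hb' ha' (by linarith)
      have hco : b*y + a*x = a*x + b*y := by ring
      rw [hco] at hk
      linarith
  -- conclusion
  refine ⟨u, φ, hφ, hucont, huconv, ?_⟩
  intro K hK hKc
  rcases K.eq_empty_or_nonempty with rfl | hne
  · exact tendstoUniformlyOn_empty
  · have hαK : sInf K ∈ K := hKc.sInf_mem hne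
    have hβK : sSup K ∈ K := hKc.sSup_mem hne
    have hα : sInf K ∈ Ioo (0:ℝ) 1 := hK hαK
    have hβ : sSup K ∈ Ioo (0:ℝ) 1 := hK hβK
    have hαβ : sInf K ≤ sSup K := csInf_le_csSup hne hKc.bddBelow hKc.bddAbove
    set δ := min (sInf K) (1 - sSup K) with hδdef
    have hδ0 : 0 < δ := lt_min hα.1 (by linarith [hβ.2])
    have hδ2 : δ ≤ 1/2 := by
      have h1 := min_le_left (sInf K) (1 - sSup K)
      have h2 := min_le_right (sInf K) (1 - sSup K)
      rw [← hδdef] at h1 h2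
      linarith
    have hsub : K ⊆ Icc δ (1-δ) := by
      intro z hz
      have hz1 : sInf K ≤ z := csInf_le hKc.bddBelow hz
      have hz2 : z ≤ sSup K := le_csSup hKc.bddAbove hz
      have h1 := min_le_left (sInf K) (1 - sSup K)
      have h2 := min_le_right (sInf K) (1 - sSup K)
      rw [← hδdef] at h1 h2
      exact ⟨by linarith, by linarith⟩
    refine TendstoUniformlyOn.mono ?_ hsub
    refine (hUC δ hδ0 hδ2).tendstoUniformlyOn_of_tendsto ?_
    intro z hz
    have hzI : z ∈ Ioo (0:ℝ) 1 := ⟨lt_of_lt_of_le hδ0 hz.1, by linarith [hz.2]⟩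
    rw [huv z hzI]
    exact hv z hzI
end

section
/- Let d = 2, h = 1/2, and let u be the function on the 3×3 grid M_{1/2} ⊂ [0,1]² defined by u(0,1) = 1, u(1/2,1) = 1, u(1,1) = 1, u(0,1/2) = 1/2, u(1/2,1/2) = 5/8, u(1,1/2) = 1, u(0,0) = 0, u(1/2,0) = 1/2, u(1,0) = 1. Then the discrete Hessian H_{1/2} u(1/2,1/2) equals the matrix [[1, −1], [−1, 1]], which is positive semidefinite; nevertheless (u(0,0) + u(1,1))/2 = 1/2 < 5/8 = u(1/2,1/2), so u is not midpoint-convex along the diagonal and hence is not the restriction of any convex function on [0,1]². -/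
open Set

/-- For the discrete function `u` on the 3×3 grid `M_{1/2} ⊂ [0,1]²` with
the indicated values, the discrete Hessian at the interior point `(1/2,1/2)` (with
`h = 1/2`) equals `[[1,-1],[-1,1]]`, which is positive semidefinite; nevertheless
`(u(0,0)+u(1,1))/2 = 1/2 < 5/8 = u(1/2,1/2)`, so `u` is not midpoint convex along the
diagonal, and `u` is not the restriction to the grid of any convex function on `[0,1]²`. -/
theorem stmt_4 (u : ℝ → ℝ → ℝ)
    (h01 : u 0 1 = 1) (h51 : u (1/2) 1 = 1) (h11 : u 1 1 = 1)
    (h05 : u 0 (1/2) = 1/2) (h55 : u (1/2) (1/2) = 5/8) (h15 : u 1 (1/2) = 1)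
    (h00 : u 0 0 = 0) (h50 : u (1/2) 0 = 1/2) (h10 : u 1 0 = 1) :
    (!![(u 1 (1/2) - 2 * u (1/2) (1/2) + u 0 (1/2)) / (1/2 : ℝ)^2,
        (u 1 1 - u 0 1 - u 1 0 + u 0 0) / (4 * (1/2 : ℝ)^2);
        (u 1 1 - u 0 1 - u 1 0 + u 0 0) / (4 * (1/2 : ℝ)^2),
        (u (1/2) 1 - 2 * u (1/2) (1/2) + u (1/2) 0) / (1/2 : ℝ)^2]
      = (!![1, -1; -1, 1] : Matrix (Fin 2) (Fin 2) ℝ)) ∧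
    (!![1, -1; -1, 1] : Matrix (Fin 2) (Fin 2) ℝ).PosSemidef ∧
    ((u 0 0 + u 1 1) / 2 = 1/2 ∧ (1/2 : ℝ) < 5/8 ∧ u (1/2) (1/2) = 5/8) ∧
    ¬ ∃ v : ℝ × ℝ → ℝ,
        ConvexOn ℝ (Icc (0 : ℝ) 1 ×ˢ Icc (0 : ℝ) 1) v ∧
        ∀ p ∈ ({0, 1/2, 1} : Set ℝ), ∀ q ∈ ({0, 1/2, 1} : Set ℝ),
          v (p, q) = u p q := by
  refine ⟨?_, ?_, ⟨by rw [h00, h11]; norm_num, by norm_num, h55⟩, ?_⟩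
  · rw [h01, h51, h11, h05, h55, h15, h00, h50, h10]
    norm_num [Matrix.ext_iff.symm, Fin.forall_fin_two]
  · refine Matrix.posSemidef_iff_dotProduct_mulVec.mpr ⟨?_, fun x => ?_⟩
    · ext i j; fin_cases i <;> fin_cases j <;> rfl
    · have : dotProduct (star x)
          ((!![1, -1; -1, 1] : Matrix (Fin 2) (Fin 2) ℝ).mulVec x) = (x 0 - x 1)^2 := by
        simp [dotProduct, Matrix.mulVec, Fin.sum_univ_two]; ring
      rw [this]; positivity
  · rintro ⟨v, hconv, hv⟩
    have m0 : (0:ℝ) ∈ ({0, 1/2, 1} : Set ℝ) := by norm_num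
    have m5 : (1/2:ℝ) ∈ ({0, 1/2, 1} : Set ℝ) := by norm_num
    have m1 : (1:ℝ) ∈ ({0, 1/2, 1} : Set ℝ) := by norm_num
    have h1 : ((0:ℝ),(0:ℝ)) ∈ Icc (0 : ℝ) 1 ×ˢ Icc (0 : ℝ) 1 := by
      constructor <;> norm_num
    have h2 : ((1:ℝ),(1:ℝ)) ∈ Icc (0 : ℝ) 1 ×ˢ Icc (0 : ℝ) 1 := by
      constructor <;> norm_num
    have key := hconv.2 h1 h2 (by norm_num : (0:ℝ) ≤ 1/2) (by norm_num : (0:ℝ) ≤ 1/2)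
      (by norm_num : (1/2:ℝ) + 1/2 = 1)
    have e : (1/2:ℝ) • ((0:ℝ),(0:ℝ)) + (1/2:ℝ) • ((1:ℝ),(1:ℝ)) = ((1/2:ℝ),(1/2:ℝ)) := by
      simp [Prod.ext_iff]
    rw [e, hv _ m5 _ m5, hv _ m0 _ m0, hv _ m1 _ m1, h55, h00, h11] at key
    norm_num at key
end

section
/- Let u : Q = [0,1]^d → ℝ be a convex function of class C³. Then for every ε > 0 there exists h₀ = h₀(u,ε) > 0 such that for every h = 1/n with 0 < h < h₀ there exists a function u_h : M_h → ℝ satisfying, for all x ∈ M_h, |u_h(x) − u(x)| + Σ_{i=1}^d |D_{h,i}u_h(x) − ∂_i u(x)| + Σ_{1≤i≤j≤d} |D²_{h,ij}u_h(x) − ∂²_{ij}u(x)| < ε (where for boundary mesh points only the finite differences that are defined at x are included), and such that H_h u_h(x) is positive semidefinite for all interior mesh points x ∈ M̊_h. -/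
open Set Filter
open scoped Classical

namespace Stmt12

variable (d : ℕ)

/-- The cube `Q = [0,1]^d`. -/
def Q : Set (Fin d → ℝ) := Icc 0 1

/-- The canonical basis vector `e i`. -/
def ee (i : Fin d) : Fin d → ℝ := Pi.single i 1

/-- `x` belongs to the mesh `M_h`, i.e. `x ∈ Q` and `x = h • z` for some `z ∈ ℤ^d`. -/
def onMesh (h : ℝ) (x : Fin d → ℝ) : Prop :=
  x ∈ Icc (0 : Fin d → ℝ) 1 ∧ ∀ i, ∃ z : ℤ, x i = h * z

/-- `x` is an interior mesh point: `x ∈ M_h ∩ (0,1)^d`. -/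
def inMesh (h : ℝ) (x : Fin d → ℝ) : Prop :=
  onMesh d h x ∧ ∀ i, 0 < x i ∧ x i < 1

/-- First order forward finite difference `D_{h,i} u (x)`. -/
noncomputable def D1 (h : ℝ) (u : (Fin d → ℝ) → ℝ) (x : Fin d → ℝ) (i : Fin d) : ℝ :=
  (u (x + h • ee d i) - u x) / h

/-- Second order finite differences `D²_{h,ij} u (x)`. -/
noncomputable def D2 (h : ℝ) (u : (Fin d → ℝ) → ℝ) (x : Fin d → ℝ) (i j : Fin d) : ℝ :=
  if i = j then (u (x + h • ee d i) - 2 * u x + u (x - h • ee d i)) / h ^ 2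
  else
    (u (x + h • ee d i + h • ee d j) - u (x - h • ee d i + h • ee d j) -
        u (x + h • ee d i - h • ee d j) + u (x - h • ee d i - h • ee d j)) /
      (4 * h ^ 2)

/-- The points needed for `D²_{h,ij} u (x)` all lie in the mesh `M_h`. -/
def D2defined (h : ℝ) (x : Fin d → ℝ) (i j : Fin d) : Prop :=
  if i = j then onMesh d h (x + h • ee d i) ∧ onMesh d h (x - h • ee d i)
  else
    onMesh d h (x + h • ee d i + h • ee d j) ∧ onMesh d h (x - h • ee d i + h • ee d j) ∧
      onMesh d h (x + h • ee d i - h • ee d j) ∧ onMesh d h (x - h • ee d i - h • ee d j)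

/-- The discrete Hessian `H_h u (x)`. -/
noncomputable def Hd (h : ℝ) (u : (Fin d → ℝ) → ℝ) (x : Fin d → ℝ) : Matrix (Fin d) (Fin d) ℝ :=
  Matrix.of fun i j => D2 d h u x i j

/-- First partial derivative `∂_i u` (derivative taken within `Q`). -/
noncomputable def pd (u : (Fin d → ℝ) → ℝ) (i : Fin d) (y : Fin d → ℝ) : ℝ :=
  fderivWithin ℝ u (Q d) y (ee d i)

/-- Second partial derivative `∂²_{ij} u` (derivatives taken within `Q`). -/
noncomputable def pd2 (u : (Fin d → ℝ) → ℝ) (i j : Fin d) (y : Fin d → ℝ) : ℝ :=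
  fderivWithin ℝ (fun z => pd d u j z) (Q d) y (ee d i)

end Stmt12

open Stmt12

section Geom
variable {d : ℕ}

lemma memQ_iff (x : Fin d → ℝ) : x ∈ Q d ↔ ∀ i, 0 ≤ x i ∧ x i ≤ 1 := by
  simp [Q, Set.mem_Icc, Pi.le_def, forall_and]

lemma hQconv : Convex ℝ (Q d) := convex_Icc _ _

lemma hQint : (interior (Q d)).Nonempty := by
  refine ⟨fun _ => 1/2, ?_⟩
  rw [Q, ← Set.pi_univ_Icc, interior_pi_set Set.finite_univ]
  intro i _
  simp only [Pi.zero_apply, Pi.one_apply, interior_Icc, Set.mem_Ioo]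
  norm_num

lemma hQud : UniqueDiffOn ℝ (Q d) := uniqueDiffOn_convex hQconv hQint

lemma shift_mem_Q {n : ℕ} (hn : 0 < n) {x : Fin d → ℝ}
    (hx : ∀ k, 1/(n:ℝ) ≤ x k ∧ x k ≤ 1 - 1/(n:ℝ))
    (w : Fin d → ℝ) (hw : ∀ k, |w k| ≤ 1/(n:ℝ)) : x + w ∈ Q d := by
  rw [memQ_iff]
  intro i
  have h1 := hx i
  have h2 := abs_le.1 (hw i)
  constructor <;> simp only [Pi.add_apply] <;> linarith [h1.1, h1.2, h2.1, h2.2]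

lemma interior_coords {n : ℕ} (hn : 0 < n) {x : Fin d → ℝ} (hx : inMesh d (1/n) x) :
    ∀ k, 1/(n:ℝ) ≤ x k ∧ x k ≤ 1 - 1/(n:ℝ) := by
  intro k
  obtain ⟨⟨hxQ, hmesh⟩, hint⟩ := hx
  obtain ⟨z, hz⟩ := hmesh k
  have hn' : (0:ℝ) < n := by exact_mod_cast hn
  have h1 : (0:ℝ) < x k := (hint k).1
  have h2 : x k < 1 := (hint k).2
  have hz1 : (1:ℤ) ≤ z := by
    by_contra hc
    push_neg at hc
    have : (z:ℝ) ≤ 0 := by exact_mod_cast Int.lt_add_one_iff.mp (by omega)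
    have : x k ≤ 0 := by
      rw [hz]
      have : (0:ℝ) < 1/n := by positivity
      nlinarith
    linarith
  have hz2 : (z:ℤ) ≤ n - 1 := by
    by_contra hc
    push_neg at hc
    have hzn : (n:ℤ) ≤ z := by omega
    have : (n:ℝ) ≤ (z:ℝ) := by exact_mod_cast hzn
    have : (1:ℝ) ≤ x k := by
      rw [hz]
      rw [div_mul_eq_mul_div, one_mul, le_div_iff₀ hn']
      linarith
    linarith
  constructor
  · rw [hz]
    have : (1:ℝ) ≤ (z:ℝ) := by exact_mod_cast hz1
    have h0 : (0:ℝ) < 1/n := by positivity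
    nlinarith
  · rw [hz]
    have : (z:ℝ) ≤ (n:ℝ) - 1 := by
      have : ((z:ℝ)) ≤ ((n - 1 : ℤ) : ℝ) := by exact_mod_cast hz2
      push_cast at this
      linarith
    rw [div_mul_eq_mul_div, one_mul, div_le_iff₀ hn']
    have hexp : (1 - 1/(n:ℝ))*n = n - 1 := by field_simp
    rw [hexp]
    linarith

lemma single_coord_abs (i : Fin d) (a : ℝ) (k : Fin d) : |(a • ee d i) k| ≤ |a| := by
  simp only [Pi.smul_apply, ee, Pi.single_apply, smul_eq_mul]
  split_ifs <;> simp [abs_nonneg]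

lemma comb_coord_abs {i j : Fin d} (hij : i ≠ j) (a b c : ℝ) (ha : |a| ≤ c) (hb : |b| ≤ c)
    (k : Fin d) : |(a • ee d i + b • ee d j) k| ≤ c := by
  simp only [Pi.add_apply, Pi.smul_apply, ee, Pi.single_apply, smul_eq_mul]
  by_cases hki : k = i <;> by_cases hkj : k = j
  · exact absurd (hki ▸ hkj) hij
  · rw [if_pos hki, if_neg hkj, mul_one, mul_zero, add_zero]; exact ha
  · rw [if_neg hki, if_pos hkj, mul_zero, mul_one, zero_add]; exact hb
  · rw [if_neg hki, if_neg hkj, mul_zero, mul_zero, add_zero]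
    simpa using (abs_nonneg a).trans ha

lemma qshift (x : Fin d → ℝ) (c : ℝ) (i : Fin d) :
    ∑ k, ((x + c • ee d i) k)^2 = (∑ k, (x k)^2) + (2*c*(x i) + c^2) := by
  have key : ∀ k : Fin d, ((x + c • ee d i) k)^2
      = (x k)^2 + (if k = i then 2*c*x k + c^2 else 0) := by
    intro k
    simp only [Pi.add_apply, Pi.smul_apply, ee, Pi.single_apply, smul_eq_mul]
    split_ifs with hk
    · ring
    · ring
  rw [Finset.sum_congr rfl (fun k _ => key k), Finset.sum_add_distrib]
  congr 1
  rw [Finset.sum_ite_eq' Finset.univ i (fun k => 2*c*x k + c^2)]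
  simp

lemma D2symm (h : ℝ) (u : (Fin d → ℝ) → ℝ) (x : Fin d → ℝ) (i j : Fin d) :
    D2 d h u x j i = D2 d h u x i j := by
  rcases eq_or_ne i j with rfl | hij
  · rfl
  · rw [D2, D2, if_neg (Ne.symm hij), if_neg hij]
    have e1 : x + h • ee d j + h • ee d i = x + h • ee d i + h • ee d j := by abel
    have e2 : x - h • ee d j + h • ee d i = x + h • ee d i - h • ee d j := by abel
    have e3 : x + h • ee d j - h • ee d i = x - h • ee d i + h • ee d j := by abel
    have e4 : x - h • ee d j - h • ee d i = x - h • ee d i - h • ee d j := by abel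
    rw [e1, e2, e3, e4]
    ring

end Geom
section Taylor
variable {E F : Type*} [NormedAddCommGroup E] [NormedSpace ℝ E]
  [NormedAddCommGroup F] [NormedSpace ℝ F]

lemma seg_norm_le' {x y z : E} (hz : z ∈ segment ℝ x y) : ‖z - x‖ ≤ ‖y - x‖ := by
  have h := dist_add_dist_of_mem_segment hz
  have h2 : dist x z ≤ dist x y := by linarith [dist_nonneg (x := z) (y := y)]
  simpa [dist_eq_norm, norm_sub_rev] using h2

lemma taylor_one' {s : Set E} (hs : Convex ℝ s) {f : E → F} {f' : E → E →L[ℝ] F} {M : ℝ}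
    (hM0 : 0 ≤ M)
    (hf : ∀ z ∈ s, HasFDerivWithinAt f (f' z) s z)
    (hM : ∀ z ∈ s, ∀ w ∈ s, ‖f' z - f' w‖ ≤ M * ‖z - w‖)
    {x y : E} (hx : x ∈ s) (hy : y ∈ s) :
    ‖f y - f x - f' x (y - x)‖ ≤ M * ‖y - x‖ ^ 2 := by
  have hseg : segment ℝ x y ⊆ s := hs.segment_subset hx hy
  have key : ∀ z ∈ segment ℝ x y,
      HasFDerivWithinAt (fun w => f w - f' x w) (f' z - f' x) (segment ℝ x y) z := fun z hz =>
    ((hf z (hseg hz)).mono hseg).sub ((f' x).hasFDerivWithinAt)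
  have bound : ∀ z ∈ segment ℝ x y, ‖f' z - f' x‖ ≤ M * ‖y - x‖ := by
    intro z hz
    refine (hM z (hseg hz) x hx).trans ?_
    exact mul_le_mul_of_nonneg_left (seg_norm_le' hz) hM0
  have := (convex_segment x y).norm_image_sub_le_of_norm_hasFDerivWithin_le key bound
    (left_mem_segment ℝ x y) (right_mem_segment ℝ x y)
  have heq : f y - f' x y - (f x - f' x x) = f y - f x - f' x (y - x) := by
    rw [map_sub]; abel
  rw [heq] at this
  calc ‖f y - f x - f' x (y - x)‖ ≤ M * ‖y - x‖ * ‖y - x‖ := this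
    _ = M * ‖y - x‖ ^ 2 := by ring

lemma taylor_two' {s : Set E} (hs : Convex ℝ s) {f : E → F} {f' : E → E →L[ℝ] F}
    {f'' : E → E →L[ℝ] E →L[ℝ] F} {M : ℝ} (hM0 : 0 ≤ M)
    (hf : ∀ z ∈ s, HasFDerivWithinAt f (f' z) s z)
    (hf' : ∀ z ∈ s, HasFDerivWithinAt f' (f'' z) s z)
    (hM : ∀ z ∈ s, ∀ w ∈ s, ‖f'' z - f'' w‖ ≤ M * ‖z - w‖)
    {x y : E} (hx : x ∈ s) (hy : y ∈ s)
    (hsymm : ∀ v w, f'' x v w = f'' x w v) :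
    ‖f y - f x - f' x (y - x) - (1/2 : ℝ) • (f'' x (y - x) (y - x))‖ ≤ M * ‖y - x‖ ^ 3 := by
  have hseg : segment ℝ x y ⊆ s := hs.segment_subset hx hy
  set g : E → F := fun w => f w - f' x w - (1/2 : ℝ) • (f'' x (w - x) (w - x)) with hg
  have hq : ∀ z ∈ segment ℝ x y, HasFDerivWithinAt
      (fun w => (1/2 : ℝ) • (f'' x (w - x) (w - x))) (f'' x (z - x)) (segment ℝ x y) z := by
    intro z hz
    have hc : HasFDerivWithinAt (fun w : E => f'' x (w - x)) (f'' x) (segment ℝ x y) z := by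
      have : (fun w : E => f'' x (w - x)) = fun w => f'' x w - f'' x x := by
        funext w; rw [map_sub]
      rw [this]
      exact ((f'' x).hasFDerivWithinAt).sub_const _
    have hu : HasFDerivWithinAt (fun w : E => w - x) (ContinuousLinearMap.id ℝ E)
        (segment ℝ x y) z := (hasFDerivWithinAt_id z _).sub_const x
    have h2 := (hc.clm_apply hu).const_smul (1/2 : ℝ)
    have heq : (1/2 : ℝ) • ((f'' x (z - x)).comp (ContinuousLinearMap.id ℝ E)
        + (f'' x).flip (z - x)) = f'' x (z - x) := by
      ext w
      simp only [ContinuousLinearMap.smul_apply, ContinuousLinearMap.add_apply,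
        ContinuousLinearMap.coe_comp', Function.comp_apply, ContinuousLinearMap.coe_id', id_eq,
        ContinuousLinearMap.flip_apply]
      rw [hsymm w (z - x), ← two_smul ℝ, smul_smul]
      norm_num
    rw [heq] at h2
    exact h2
  have hg' : ∀ z ∈ segment ℝ x y,
      HasFDerivWithinAt g (f' z - f' x - f'' x (z - x)) (segment ℝ x y) z := by
    intro z hz
    exact (((hf z (hseg hz)).mono hseg).sub ((f' x).hasFDerivWithinAt)).sub (hq z hz)
  have bound : ∀ z ∈ segment ℝ x y, ‖f' z - f' x - f'' x (z - x)‖ ≤ M * ‖y - x‖ ^ 2 := by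
    intro z hz
    refine (taylor_one' hs hM0 hf' hM hx (hseg hz)).trans ?_
    have h1 : ‖z - x‖ ≤ ‖y - x‖ := seg_norm_le' hz
    exact mul_le_mul_of_nonneg_left (pow_le_pow_left₀ (norm_nonneg _) h1 2) hM0
  have := (convex_segment x y).norm_image_sub_le_of_norm_hasFDerivWithin_le hg' bound
    (left_mem_segment ℝ x y) (right_mem_segment ℝ x y)
  have heq : g y - g x = f y - f x - f' x (y - x) - (1/2 : ℝ) • (f'' x (y - x) (y - x)) := by
    simp only [hg, sub_self, map_zero, ContinuousLinearMap.zero_apply, smul_zero, sub_zero,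
      map_sub]
    abel
  rw [heq] at this
  calc ‖f y - f x - f' x (y - x) - (1/2 : ℝ) • (f'' x (y - x) (y - x))‖
      ≤ M * ‖y - x‖ ^ 2 * ‖y - x‖ := this
    _ = M * ‖y - x‖ ^ 3 := by ring
end Taylor

noncomputable instance instNACG2 (d : ℕ) : NormedAddCommGroup ((Fin d → ℝ) →L[ℝ] (Fin d → ℝ) →L[ℝ] ℝ) := inferInstance
noncomputable instance instNS2 (d : ℕ) : NormedSpace ℝ ((Fin d → ℝ) →L[ℝ] (Fin d → ℝ) →L[ℝ] ℝ) := inferInstance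

set_option maxHeartbeats 1000000 in
/-- For every convex `u ∈ C³(Q)` and every `ε > 0` there is `h₀ > 0` such
that for every mesh size `h = 1/n < h₀` there is a discrete function `u_h` on `M_h`
whose values, first and second finite differences are within `ε` of `u` and its
derivatives (at every mesh point, counting only the finite differences defined there),
and whose discrete Hessian is positive semidefinite at every interior mesh point. -/
theorem stmt_12 (d : ℕ) (hd : 0 < d)
    (u : (Fin d → ℝ) → ℝ)
    (hu_smooth : ContDiffOn ℝ 3 u (Q d))
    (hu_conv : ConvexOn ℝ (Q d) u)
    (ε : ℝ) (hε : 0 < ε) :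
    ∃ h₀ : ℝ, 0 < h₀ ∧
      ∀ n : ℕ, 0 < n → (1 / n : ℝ) < h₀ →
        ∃ uh : (Fin d → ℝ) → ℝ,
          (∀ x, onMesh d (1 / n) x →
            |uh x - u x| +
              (∑ i : Fin d,
                if onMesh d (1 / n) (x + (1 / n : ℝ) • ee d i) then
                  |D1 d (1 / n) uh x i - pd d u i x| else 0) +
              (∑ i : Fin d, ∑ j : Fin d,
                if i ≤ j ∧ D2defined d (1 / n) x i j then
                  |D2 d (1 / n) uh x i j - pd2 d u i j x| else 0) < ε) ∧
          (∀ x, inMesh d (1 / n) x → (Hd d (1 / n) uh x).PosSemidef) := by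
  classical
  set g1 : (Fin d → ℝ) → (Fin d → ℝ) →L[ℝ] ℝ := fderivWithin ℝ u (Q d) with hg1def
  set g2 := fderivWithin ℝ g1 (Q d) with hg2def
  have hc1 : ContDiffOn ℝ 2 g1 (Q d) := hu_smooth.fderivWithin hQud (by norm_num)
  have hc2 : ContDiffOn ℝ 1 g2 (Q d) := hc1.fderivWithin hQud (by norm_num)
  have hd0 : ∀ z ∈ Q d, HasFDerivWithinAt u (g1 z) (Q d) z := fun z hz =>
    ((hu_smooth.differentiableOn (by norm_num)) z hz).hasFDerivWithinAt
  have hd1 : ∀ z ∈ Q d, HasFDerivWithinAt g1 (g2 z) (Q d) z := fun z hz =>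
    ((hc1.differentiableOn (by norm_num)) z hz).hasFDerivWithinAt
  have hd2 : ∀ z ∈ Q d, HasFDerivWithinAt g2 (fderivWithin ℝ g2 (Q d) z) (Q d) z := fun z hz =>
    ((hc2.differentiableOn (by norm_num)) z hz).hasFDerivWithinAt
  have hcont2 : ContinuousOn g2 (Q d) := hc2.continuousOn
  have hc3 : ContDiffOn ℝ 0 (fderivWithin ℝ g2 (Q d)) (Q d) :=
    hc2.fderivWithin hQud (by norm_num)
  have hcont3 : ContinuousOn (fderivWithin ℝ g2 (Q d)) (Q d) := hc3.continuousOn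
  obtain ⟨M2, hM2⟩ := (isCompact_Icc : IsCompact (Q d)).exists_bound_of_continuousOn hcont2
  obtain ⟨M3, hM3⟩ := (isCompact_Icc : IsCompact (Q d)).exists_bound_of_continuousOn hcont3
  set M : ℝ := max 1 (max M2 M3) with hMdef
  have hM1 : (1:ℝ) ≤ M := le_max_left _ _
  have hM0 : (0:ℝ) ≤ M := by linarith
  have hMg2 : ∀ z ∈ Q d, ‖g2 z‖ ≤ M := fun z hz =>
    (hM2 z hz).trans ((le_max_left _ _).trans (le_max_right _ _))
  have hMg3 : ∀ z ∈ Q d, ‖fderivWithin ℝ g2 (Q d) z‖ ≤ M := fun z hz =>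
    (hM3 z hz).trans ((le_max_right _ _).trans (le_max_right _ _))
  have hLip1 : ∀ z ∈ Q d, ∀ w ∈ Q d, ‖g1 z - g1 w‖ ≤ M * ‖z - w‖ := fun z hz w hw =>
    hQconv.norm_image_sub_le_of_norm_hasFDerivWithin_le hd1 hMg2 hw hz
  have hLip2 : ∀ z ∈ Q d, ∀ w ∈ Q d, ‖g2 z - g2 w‖ ≤ M * ‖z - w‖ := fun z hz w hw =>
    hQconv.norm_image_sub_le_of_norm_hasFDerivWithin_le hd2 hMg3 hw hz
  have hsym : ∀ x ∈ Q d, ∀ v w, g2 x v w = g2 x w v := by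
    intro x hx v w
    refine hQconv.second_derivative_within_at_symmetric (f := u) (f' := g1) hQint ?_ hx ?_ v w
    · intro y hy
      exact (hd0 y (interior_subset hy)).hasFDerivAt (mem_interior_iff_mem_nhds.1 hy)
    · exact (hd1 x hx).mono interior_subset
  have hT1 : ∀ x ∈ Q d, ∀ y ∈ Q d, |u y - u x - g1 x (y - x)| ≤ M * ‖y - x‖^2 := by
    intro x hx y hy
    have := taylor_one' hQconv hM0 hd0 hLip1 hx hy
    rwa [Real.norm_eq_abs] at this
  have hT2 : ∀ x ∈ Q d, ∀ y ∈ Q d,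
      |u y - u x - g1 x (y - x) - (1/2) * (g2 x (y - x) (y - x))| ≤ M * ‖y - x‖^3 := by
    intro x hx y hy
    have := taylor_two' hQconv hM0 hd0 hd1 hLip2 hx hy (hsym x hx)
    rwa [smul_eq_mul, Real.norm_eq_abs] at this
  have hPure : ∀ x ∈ Q d, ∀ w, x + w ∈ Q d → x - w ∈ Q d →
      |u (x + w) - 2*u x + u (x - w) - g2 x w w| ≤ 2*M*‖w‖^3 := by
    intro x hx w hw1 hw2
    have hA := hT2 x hx _ hw1
    have hB := hT2 x hx _ hw2
    rw [add_sub_cancel_left] at hA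
    rw [sub_sub_cancel_left] at hB
    simp only [map_neg, ContinuousLinearMap.neg_apply, neg_neg, norm_neg] at hB
    have hsum : u (x + w) - 2*u x + u (x - w) - g2 x w w
        = (u (x + w) - u x - g1 x w - (1/2) * (g2 x w w))
          + (u (x - w) - u x - (-(g1 x w)) - (1/2) * (g2 x w w)) := by ring
    rw [hsum]
    calc |_ + _| ≤ _ := abs_add_le _ _
      _ ≤ M*‖w‖^3 + M*‖w‖^3 := add_le_add hA hB
      _ = 2*M*‖w‖^3 := by ring
  have hMix : ∀ x ∈ Q d, ∀ w₁ w₂ : Fin d → ℝ, x + w₁ + w₂ ∈ Q d → x - w₁ + w₂ ∈ Q d →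
      x + w₁ - w₂ ∈ Q d → x - w₁ - w₂ ∈ Q d →
      |u (x + w₁ + w₂) - u (x - w₁ + w₂) - u (x + w₁ - w₂) + u (x - w₁ - w₂)
        - 4 * g2 x w₁ w₂| ≤ 4*M*(‖w₁‖ + ‖w₂‖)^3 := by
    intro x hx w₁ w₂ h1 h2 h3 h4
    have hcb : g2 x w₂ w₁ = g2 x w₁ w₂ := hsym x hx w₂ w₁
    have e1 : x + w₁ + w₂ = x + (w₁ + w₂) := by abel
    have e2 : x - w₁ + w₂ = x + (-w₁ + w₂) := by abel
    have e3 : x + w₁ - w₂ = x + (w₁ - w₂) := by abel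
    have e4 : x - w₁ - w₂ = x + (-w₁ - w₂) := by abel
    rw [e1] at h1; rw [e2] at h2; rw [e3] at h3; rw [e4] at h4
    have hA := hT2 x hx _ h1
    have hB := hT2 x hx _ h2
    have hC := hT2 x hx _ h3
    have hD := hT2 x hx _ h4
    rw [add_sub_cancel_left] at hA hB hC hD
    have l1 : g1 x (w₁ + w₂) = g1 x w₁ + g1 x w₂ := map_add _ _ _
    have l2 : g1 x (-w₁ + w₂) = -(g1 x w₁) + g1 x w₂ := by rw [map_add, map_neg]
    have l3 : g1 x (w₁ - w₂) = g1 x w₁ - g1 x w₂ := map_sub _ _ _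
    have l4 : g1 x (-w₁ - w₂) = -(g1 x w₁) - g1 x w₂ := by rw [map_sub, map_neg]
    have q1 : g2 x (w₁ + w₂) (w₁ + w₂) = g2 x w₁ w₁ + 2 * g2 x w₁ w₂ + g2 x w₂ w₂ := by
      simp only [map_add, ContinuousLinearMap.add_apply]
      rw [hcb]; ring
    have q2 : g2 x (-w₁ + w₂) (-w₁ + w₂) = g2 x w₁ w₁ - 2 * g2 x w₁ w₂ + g2 x w₂ w₂ := by
      simp only [map_add, map_neg, ContinuousLinearMap.add_apply,
        ContinuousLinearMap.neg_apply]
      rw [hcb]; ring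
    have q3 : g2 x (w₁ - w₂) (w₁ - w₂) = g2 x w₁ w₁ - 2 * g2 x w₁ w₂ + g2 x w₂ w₂ := by
      simp only [map_sub, ContinuousLinearMap.sub_apply]
      rw [hcb]; ring
    have q4 : g2 x (-w₁ - w₂) (-w₁ - w₂) = g2 x w₁ w₁ + 2 * g2 x w₁ w₂ + g2 x w₂ w₂ := by
      simp only [map_sub, map_neg, ContinuousLinearMap.sub_apply,
        ContinuousLinearMap.neg_apply]
      rw [hcb]; ring
    rw [l1, q1] at hA; rw [l2, q2] at hB; rw [l3, q3] at hC; rw [l4, q4] at hD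
    set A1 := u (x + (w₁ + w₂)) - u x - (g1 x w₁ + g1 x w₂)
            - 1/2 * (g2 x w₁ w₁ + 2 * g2 x w₁ w₂ + g2 x w₂ w₂) with hA1d
    set A2 := u (x + (-w₁ + w₂)) - u x - (-(g1 x w₁) + g1 x w₂)
            - 1/2 * (g2 x w₁ w₁ - 2 * g2 x w₁ w₂ + g2 x w₂ w₂) with hA2d
    set A3 := u (x + (w₁ - w₂)) - u x - (g1 x w₁ - g1 x w₂)
            - 1/2 * (g2 x w₁ w₁ - 2 * g2 x w₁ w₂ + g2 x w₂ w₂) with hA3d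
    set A4 := u (x + (-w₁ - w₂)) - u x - (-(g1 x w₁) - g1 x w₂)
            - 1/2 * (g2 x w₁ w₁ + 2 * g2 x w₁ w₂ + g2 x w₂ w₂) with hA4d
    have keyeq : u (x + w₁ + w₂) - u (x - w₁ + w₂) - u (x + w₁ - w₂) + u (x - w₁ - w₂)
        - 4 * g2 x w₁ w₂ = A1 - A2 - A3 + A4 := by
      rw [hA1d, hA2d, hA3d, hA4d, e1, e2, e3, e4]; ring
    rw [keyeq]
    have hn1 : ‖w₁ + w₂‖ ≤ ‖w₁‖ + ‖w₂‖ := norm_add_le _ _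
    have hn2 : ‖-w₁ + w₂‖ ≤ ‖w₁‖ + ‖w₂‖ := by
      rw [← norm_neg w₁]; exact norm_add_le _ _
    have hn3 : ‖w₁ - w₂‖ ≤ ‖w₁‖ + ‖w₂‖ := norm_sub_le _ _
    have hn4 : ‖-w₁ - w₂‖ ≤ ‖w₁‖ + ‖w₂‖ := by
      rw [← norm_neg w₁]; exact norm_sub_le _ _
    have cube : ∀ a : ℝ, 0 ≤ a → a ≤ ‖w₁‖ + ‖w₂‖ → M * a^3 ≤ M * (‖w₁‖ + ‖w₂‖)^3 :=
      fun a ha hab => mul_le_mul_of_nonneg_left (pow_le_pow_left₀ ha hab 3) hM0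
    have bA := hA.trans (cube _ (norm_nonneg _) hn1)
    have bB := hB.trans (cube _ (norm_nonneg _) hn2)
    have bC := hC.trans (cube _ (norm_nonneg _) hn3)
    have bD := hD.trans (cube _ (norm_nonneg _) hn4)
    have t1 : |A1 - A2| ≤ |A1| + |A2| := abs_sub _ _
    have t2 : |A1 - A2 - A3| ≤ |A1 - A2| + |A3| := abs_sub _ _
    have t3 : |A1 - A2 - A3 + A4| ≤ |A1 - A2 - A3| + |A4| := abs_add_le _ _
    have := abs_nonneg (A1 - A2)
    linarith
  have hpd : ∀ (x : Fin d → ℝ) (i : Fin d), pd d u i x = g1 x (ee d i) := by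
    intro x i
    simp only [pd, hg1def]
  have hpd2 : ∀ x ∈ Q d, ∀ i j : Fin d, pd2 d u i j x = g2 x (ee d i) (ee d j) := by
    intro x hx i j
    have h1 : HasFDerivWithinAt (fun z => g1 z (ee d j)) ((g2 x).flip (ee d j)) (Q d) x := by
      have h2 := (hd1 x hx).clm_apply (hasFDerivWithinAt_const (ee d j) x (Q d))
      simpa using h2
    have h3 := h1.fderivWithin (hQud x hx)
    have h4 : (fun z => pd d u j z) = fun z => g1 z (ee d j) := by
      funext z; simp only [pd, hg1def]
    show fderivWithin ℝ (fun z => pd d u j z) (Q d) x (ee d i) = _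
    rw [h4, h3]
    rfl
  have hbil : ∀ x ∈ Q d, ∀ a b : Fin d → ℝ,
      g2 x a b = ∑ i, ∑ j, a i * b j * g2 x (ee d i) (ee d j) := by
    intro x hx a b
    have ha : a = ∑ i, a i • ee d i := by
      ext k; rw [Finset.sum_apply]; simp [ee, Pi.single_apply]
    have hb : b = ∑ j, b j • ee d j := by
      ext k; rw [Finset.sum_apply]; simp [ee, Pi.single_apply]
    conv_lhs => rw [ha, hb]
    simp only [map_sum, map_smul, ContinuousLinearMap.sum_apply,
      ContinuousLinearMap.smul_apply, smul_eq_mul]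
    rw [Finset.sum_comm]
    refine Finset.sum_congr rfl fun i _ => ?_
    rw [Finset.mul_sum]
    refine Finset.sum_congr rfl fun j _ => ?_
    rw [hsym x hx (ee d j) (ee d i)]
    ring
  have hq0 : ∀ x ∈ Q d, (∀ i, 0 < x i ∧ x i < 1) → ∀ v : Fin d → ℝ, 0 ≤ g2 x v v := by
    intro x hx hxint v
    by_cases hv0 : v = 0
    · simp [hv0]
    have hvn : 0 < ‖v‖ := norm_pos_iff.2 hv0
    haveI : Nonempty (Fin d) := Fin.pos_iff_nonempty.1 hd
    have hne : (Finset.univ : Finset (Fin d)).Nonempty := Finset.univ_nonempty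
    set ρ := Finset.univ.inf' hne (fun i => min (x i) (1 - x i)) with hρdef
    have hρpos : 0 < ρ := by
      rw [hρdef, Finset.lt_inf'_iff]
      intro i _
      exact lt_min (hxint i).1 (by linarith [(hxint i).2])
    have hmem : ∀ t : ℝ, 0 < t → t * ‖v‖ ≤ ρ → x + t • v ∈ Q d ∧ x - t • v ∈ Q d := by
      intro t ht htρ
      have hcoord : ∀ k, |t * v k| ≤ ρ := by
        intro k
        rw [abs_mul, abs_of_pos ht]
        refine le_trans ?_ htρ
        have hk : |v k| ≤ ‖v‖ := by
          have := norm_le_pi_norm v k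
          rwa [Real.norm_eq_abs] at this
        nlinarith
      have hρk : ∀ k, ρ ≤ min (x k) (1 - x k) := fun k =>
        Finset.inf'_le _ (Finset.mem_univ k)
      constructor
      · rw [memQ_iff]; intro k
        have h3 := abs_le.1 (hcoord k)
        have h4 := le_min_iff.1 (hρk k)
        simp only [Pi.add_apply, Pi.smul_apply, smul_eq_mul]
        constructor <;> linarith [h3.1, h3.2, h4.1, h4.2, (hxint k).1, (hxint k).2]
      · rw [memQ_iff]; intro k
        have h3 := abs_le.1 (hcoord k)
        have h4 := le_min_iff.1 (hρk k)
        simp only [Pi.sub_apply, Pi.smul_apply, smul_eq_mul]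
        constructor <;> linarith [h3.1, h3.2, h4.1, h4.2, (hxint k).1, (hxint k).2]
    have hkey : ∀ t : ℝ, 0 < t → t * ‖v‖ ≤ ρ → -(2*M*‖v‖^3) * t ≤ g2 x v v := by
      intro t ht htρ
      obtain ⟨hm1, hm2⟩ := hmem t ht htρ
      have hconv : u x ≤ (u (x + t • v) + u (x - t • v))/2 := by
        have h12 : (1/2 : ℝ) • (x + t • v) + (1/2 : ℝ) • (x - t • v) = x := by module
        have hcc := hu_conv.2 hm1 hm2 (by norm_num : (0:ℝ) ≤ 1/2)
          (by norm_num : (0:ℝ) ≤ 1/2) (by norm_num : (1/2:ℝ) + 1/2 = 1)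
        rw [h12] at hcc
        rw [smul_eq_mul, smul_eq_mul] at hcc
        linarith
      have hp := hPure x hx (t • v) hm1 hm2
      have hg2t : g2 x (t • v) (t • v) = t^2 * g2 x v v := by
        simp only [map_smul, ContinuousLinearMap.smul_apply, smul_eq_mul]
        ring
      have hnt : ‖t • v‖ = t * ‖v‖ := by
        rw [norm_smul, Real.norm_eq_abs, abs_of_pos ht]
      rw [hg2t, hnt] at hp
      have habs := (abs_le.1 hp).2
      have hnn : 0 ≤ u (x + t • v) - 2*u x + u (x - t • v) := by linarith
      have hfin : -(2*M*(t*‖v‖)^3) ≤ t^2 * g2 x v v := by linarith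
      nlinarith [mul_pos ht ht]
    by_contra hneg
    push_neg at hneg
    have hDpos : (0:ℝ) < 2*M*‖v‖^3 + 1 := by positivity
    set t₀ := min (ρ/‖v‖) ((-(g2 x v v))/(2*M*‖v‖^3+1)) with ht₀def
    have ht₀pos : 0 < t₀ :=
      lt_min (div_pos hρpos hvn) (div_pos (by linarith) hDpos)
    have hta : t₀ * ‖v‖ ≤ ρ := by
      have h5 : t₀ ≤ ρ/‖v‖ := min_le_left _ _
      rw [le_div_iff₀ hvn] at h5
      exact h5
    have h1 := hkey t₀ ht₀pos hta
    have h2 : t₀ ≤ (-(g2 x v v))/(2*M*‖v‖^3+1) := min_le_right _ _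
    rw [le_div_iff₀ hDpos] at h2
    nlinarith
  -- norm of scaled basis vector
  have hnee : ∀ (c : ℝ) (i : Fin d), 0 < c → ‖(c • ee d i : Fin d → ℝ)‖ = c := by
    intro c i hc
    rw [norm_smul, Real.norm_eq_abs, abs_of_pos hc]
    have : ‖ee d i‖ = 1 := by
      simp only [ee]
      rw [Pi.norm_single, norm_one]
    rw [this, mul_one]
  -- factored difference estimates
  have hD2est_pure : ∀ (h' : ℝ), 0 < h' → ∀ x ∈ Q d, ∀ i : Fin d,
      x + h' • ee d i ∈ Q d → x - h' • ee d i ∈ Q d →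
      |D2 d h' u x i i - g2 x (ee d i) (ee d i)| ≤ 8*M*h' := by
    intro h' hh' x hx i hm1 hm2
    have hp := hPure x hx (h' • ee d i) hm1 hm2
    rw [hnee h' i hh'] at hp
    have hg2s : g2 x (h' • ee d i) (h' • ee d i) = h'^2 * g2 x (ee d i) (ee d i) := by
      simp only [map_smul, ContinuousLinearMap.smul_apply, smul_eq_mul]; ring
    rw [hg2s] at hp
    simp only [D2, eq_self_iff_true, if_true]
    have heq : (u (x + h' • ee d i) - 2*u x + u (x - h' • ee d i))/h'^2
        - g2 x (ee d i) (ee d i)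
        = (u (x + h' • ee d i) - 2*u x + u (x - h' • ee d i)
          - h'^2 * g2 x (ee d i) (ee d i))/h'^2 := by
      field_simp
    rw [heq, abs_div, abs_of_pos (by positivity : (0:ℝ) < h'^2),
      div_le_iff₀ (by positivity : (0:ℝ) < h'^2)]
    refine hp.trans ?_
    nlinarith [mul_nonneg hM0 (mul_nonneg (mul_nonneg hh'.le hh'.le) hh'.le)]
  have hD2est_mix : ∀ (h' : ℝ), 0 < h' → ∀ x ∈ Q d, ∀ i j : Fin d, i ≠ j →
      x + h' • ee d i + h' • ee d j ∈ Q d → x - h' • ee d i + h' • ee d j ∈ Q d →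
      x + h' • ee d i - h' • ee d j ∈ Q d → x - h' • ee d i - h' • ee d j ∈ Q d →
      |D2 d h' u x i j - g2 x (ee d i) (ee d j)| ≤ 8*M*h' := by
    intro h' hh' x hx i j hij hm1 hm2 hm3 hm4
    have hmx := hMix x hx (h' • ee d i) (h' • ee d j) hm1 hm2 hm3 hm4
    rw [hnee h' i hh', hnee h' j hh'] at hmx
    have hg2s : g2 x (h' • ee d i) (h' • ee d j) = h'^2 * g2 x (ee d i) (ee d j) := by
      simp only [map_smul, ContinuousLinearMap.smul_apply, smul_eq_mul]; ring
    rw [hg2s] at hmx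
    simp only [D2]; rw [if_neg hij]
    have heq : (u (x + h' • ee d i + h' • ee d j) - u (x - h' • ee d i + h' • ee d j)
        - u (x + h' • ee d i - h' • ee d j) + u (x - h' • ee d i - h' • ee d j))/(4*h'^2)
        - g2 x (ee d i) (ee d j)
        = (u (x + h' • ee d i + h' • ee d j) - u (x - h' • ee d i + h' • ee d j)
        - u (x + h' • ee d i - h' • ee d j) + u (x - h' • ee d i - h' • ee d j)
          - 4 * (h'^2 * g2 x (ee d i) (ee d j)))/(4*h'^2) := by
      field_simp
    rw [heq, abs_div, abs_of_pos (by positivity : (0:ℝ) < 4*h'^2),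
      div_le_iff₀ (by positivity : (0:ℝ) < 4*h'^2)]
    refine hmx.trans (le_of_eq ?_)
    ring
  -- the perturbation
  set δ : ℝ := ε / (8 * ((d:ℝ)+1)^2) with hδdef
  have hδpos : 0 < δ := by positivity
  set uhf : (Fin d → ℝ) → ℝ := fun y => u y + δ * ∑ k, (y k)^2 with huhdef
  have hval : ∀ y, uhf y = u y + δ * ∑ k, (y k)^2 := fun y => rfl
  have hD1q : ∀ (h' : ℝ), h' ≠ 0 → ∀ (x : Fin d → ℝ) (i : Fin d),
      D1 d h' uhf x i = D1 d h' u x i + δ * (2 * x i + h') := by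
    intro h' hh' x i
    simp only [D1, hval]
    rw [qshift x h' i]
    field_simp
    ring
  have hD2q_pure : ∀ (h' : ℝ), h' ≠ 0 → ∀ (x : Fin d → ℝ) (i : Fin d),
      D2 d h' uhf x i i = D2 d h' u x i i + 2*δ := by
    intro h' hh' x i
    simp only [D2, eq_self_iff_true, if_true]
    simp only [hval]
    have hsub : x - h' • ee d i = x + (-h') • ee d i := by
      rw [neg_smul, ← sub_eq_add_neg]
    rw [hsub, qshift x h' i, qshift x (-h') i]
    field_simp
    ring
  have hD2q_mix : ∀ (h' : ℝ), h' ≠ 0 → ∀ (x : Fin d → ℝ) (i j : Fin d), i ≠ j →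
      D2 d h' uhf x i j = D2 d h' u x i j := by
    intro h' hh' x i j hij
    simp only [D2]; rw [if_neg hij, if_neg hij]
    simp only [hval]
    have r1 : x - h' • ee d i + h' • ee d j = x + (-h') • ee d i + h' • ee d j := by
      rw [neg_smul, ← sub_eq_add_neg]
    have r2 : x + h' • ee d i - h' • ee d j = x + h' • ee d i + (-h') • ee d j := by
      rw [neg_smul, ← sub_eq_add_neg]
    have r3 : x - h' • ee d i - h' • ee d j = x + (-h') • ee d i + (-h') • ee d j := by
      rw [neg_smul, neg_smul, ← sub_eq_add_neg, ← sub_eq_add_neg]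
    have qq : ∀ a b : ℝ, ∑ k, ((x + a • ee d i + b • ee d j) k)^2
        = (∑ k, (x k)^2) + (2*a*(x i) + a^2) + (2*b*(x j) + b^2) := by
      intro a b
      rw [qshift (x + a • ee d i) b j, qshift x a i]
      have hxj : (x + a • ee d i) j = x j := by
        simp [ee, Pi.single_apply, Ne.symm hij]
      rw [hxj]
    rw [r1, r2, r3, qq h' h', qq (-h') h', qq h' (-h'), qq (-h') (-h')]
    ring
  -- choose h₀
  refine ⟨δ / (8*M*((d:ℝ)+1)), by positivity, ?_⟩
  intro n hn hsmall
  have hnR : (0:ℝ) < n := by exact_mod_cast hn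
  set h : ℝ := 1/(n:ℝ) with hhdef
  have hpos : 0 < h := by rw [hhdef]; positivity
  have hne0 : h ≠ 0 := ne_of_gt hpos
  have hle1 : h ≤ 1 := by
    rw [hhdef, div_le_one hnR]
    exact_mod_cast hn
  have hMh : 8*M*h*((d:ℝ)+1) < δ := by
    rw [lt_div_iff₀ (by positivity : (0:ℝ) < 8*M*((d:ℝ)+1))] at hsmall
    calc 8*M*h*((d:ℝ)+1) = h * (8*M*((d:ℝ)+1)) := by ring
      _ < δ := hsmall
  refine ⟨uhf, ?_, ?_⟩
  · -- approximation goal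
    intro x hx
    have hxQ : x ∈ Q d := hx.1
    have hxc : ∀ k, 0 ≤ x k ∧ x k ≤ 1 := (memQ_iff x).1 hxQ
    have hA : |uhf x - u x| ≤ δ * d := by
      rw [hval]
      have h2 : ∑ k, (x k)^2 ≤ (d:ℝ) := by
        calc ∑ k, (x k)^2 ≤ ∑ _k : Fin d, (1:ℝ) :=
              Finset.sum_le_sum fun k _ => by nlinarith only [(hxc k).1, (hxc k).2]
          _ = (d:ℝ) := by simp
      have h3 : (0:ℝ) ≤ ∑ k, (x k)^2 := Finset.sum_nonneg fun k _ => sq_nonneg _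
      rw [show u x + δ * ∑ k, (x k)^2 - u x = δ * ∑ k, (x k)^2 by ring,
        abs_of_nonneg (by positivity)]
      exact mul_le_mul_of_nonneg_left h2 hδpos.le
    have hD1bound : ∀ i : Fin d, onMesh d h (x + h • ee d i) →
        |D1 d h uhf x i - pd d u i x| ≤ M*h + 3*δ := by
      intro i hi
      have hyQ : x + h • ee d i ∈ Q d := hi.1
      have ht := hT1 x hxQ _ hyQ
      rw [add_sub_cancel_left] at ht
      have hgs : g1 x (h • ee d i) = h * g1 x (ee d i) := by
        rw [map_smul, smul_eq_mul]
      rw [hgs, hnee h i hpos] at ht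
      have hud : |D1 d h u x i - g1 x (ee d i)| ≤ M * h := by
        have heq : D1 d h u x i - g1 x (ee d i)
            = (u (x + h • ee d i) - u x - h * g1 x (ee d i))/h := by
          rw [D1]; field_simp
        rw [heq, abs_div, abs_of_pos hpos, div_le_iff₀ hpos]
        exact ht.trans (le_of_eq (by ring))
      rw [hpd x i, hD1q h hne0 x i]
      have habs2 : |δ * (2 * x i + h)| ≤ 3*δ := by
        rw [abs_mul, abs_of_pos hδpos]
        have h3 : |2 * x i + h| ≤ 3 := by
          rw [abs_le]
          constructor <;> linarith only [(hxc i).1, (hxc i).2, hpos, hle1]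
        nlinarith only [h3, hδpos, abs_nonneg (2 * x i + h)]
      calc |D1 d h u x i + δ * (2 * x i + h) - g1 x (ee d i)|
          = |(D1 d h u x i - g1 x (ee d i)) + δ * (2 * x i + h)| := by
            rw [show D1 d h u x i + δ * (2 * x i + h) - g1 x (ee d i)
              = (D1 d h u x i - g1 x (ee d i)) + δ * (2 * x i + h) from by ring]
        _ ≤ |D1 d h u x i - g1 x (ee d i)| + |δ * (2 * x i + h)| := abs_add_le _ _
        _ ≤ M*h + 3*δ := add_le_add hud habs2
    have hD2bound : ∀ i j : Fin d, D2defined d h x i j →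
        |D2 d h uhf x i j - pd2 d u i j x| ≤ 8*M*h + 2*δ := by
      intro i j hdefd
      by_cases hij : i = j
      · subst hij
        simp only [D2defined] at hdefd
        obtain ⟨hm1, hm2⟩ := hdefd
        have hud := hD2est_pure h hpos x hxQ i hm1.1 hm2.1
        rw [hD2q_pure h hne0 x i, hpd2 x hxQ i i]
        calc |D2 d h u x i i + 2*δ - g2 x (ee d i) (ee d i)|
            = |(D2 d h u x i i - g2 x (ee d i) (ee d i)) + 2*δ| := by
              rw [show D2 d h u x i i + 2*δ - g2 x (ee d i) (ee d i)
                = (D2 d h u x i i - g2 x (ee d i) (ee d i)) + 2*δ from by ring]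
          _ ≤ |D2 d h u x i i - g2 x (ee d i) (ee d i)| + |2*δ| := abs_add_le _ _
          _ ≤ 8*M*h + 2*δ := by
              rw [abs_of_pos (by positivity : (0:ℝ) < 2*δ)]
              exact add_le_add_left hud _
      · simp only [D2defined] at hdefd
        rw [if_neg hij] at hdefd
        obtain ⟨hm1, hm2, hm3, hm4⟩ := hdefd
        have hud := hD2est_mix h hpos x hxQ i j hij hm1.1 hm2.1 hm3.1 hm4.1
        rw [hD2q_mix h hne0 x i j hij, hpd2 x hxQ i j]
        have h2δ : (0:ℝ) ≤ 2*δ := by positivity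
        linarith only [hud, h2δ]
    have hS1 : (∑ i : Fin d, if onMesh d h (x + h • ee d i)
          then |D1 d h uhf x i - pd d u i x| else 0) ≤ (d:ℝ) * (M*h + 3*δ) := by
      calc _ ≤ ∑ _i : Fin d, (M*h + 3*δ) := by
            refine Finset.sum_le_sum fun i _ => ?_
            split_ifs with hg
            · exact hD1bound i hg
            · positivity
        _ = (d:ℝ) * (M*h + 3*δ) := by
            rw [Finset.sum_const, Finset.card_univ, Fintype.card_fin, nsmul_eq_mul]
    have hS2 : (∑ i : Fin d, ∑ j : Fin d, if i ≤ j ∧ D2defined d h x i j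
        then |D2 d h uhf x i j - pd2 d u i j x| else 0) ≤ (d:ℝ)^2 * (8*M*h + 2*δ) := by
      calc _ ≤ ∑ _i : Fin d, ∑ _j : Fin d, (8*M*h + 2*δ) := by
            refine Finset.sum_le_sum fun i _ => Finset.sum_le_sum fun j _ => ?_
            split_ifs with hg
            · exact hD2bound i j hg.2
            · positivity
        _ = (d:ℝ)^2 * (8*M*h + 2*δ) := by
            rw [Finset.sum_const, Finset.sum_const, Finset.card_univ, Fintype.card_fin,
              nsmul_eq_mul, nsmul_eq_mul]
            ring
    have htot := add_le_add (add_le_add hA hS1) hS2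
    refine lt_of_le_of_lt htot ?_
    have hεδ : ε = 8*δ*((d:ℝ)+1)^2 := by
      rw [hδdef]; field_simp
    rw [hεδ]
    have hMh0 : (0:ℝ) ≤ M*h := by positivity
    have hD0 : (0:ℝ) ≤ (d:ℝ) := Nat.cast_nonneg d
    nlinarith only [mul_le_mul_of_nonneg_right hMh.le hD0, mul_nonneg hMh0 hD0, hδpos,
      hD0, mul_nonneg hδpos.le hD0, mul_nonneg (mul_nonneg hδpos.le hD0) hD0, hMh0, hMh]
  · -- PSD goal
    intro x hxm
    have hxQ : x ∈ Q d := hxm.1.1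
    have hco := interior_coords hn hxm
    have hmemshift : ∀ w : Fin d → ℝ, (∀ k, |w k| ≤ h) → x + w ∈ Q d := fun w hw =>
      shift_mem_Q hn hco w hw
    have habs_h : |h| ≤ h := by rw [abs_of_pos hpos]
    have habs_nh : |(-h)| ≤ h := by rw [abs_neg, abs_of_pos hpos]
    have hmA : ∀ (a : ℝ) (i : Fin d), |a| ≤ h → x + a • ee d i ∈ Q d := by
      intro a i ha
      exact hmemshift _ (fun k => (single_coord_abs i a k).trans ha)
    have hmB : ∀ (a b : ℝ) (i j : Fin d), i ≠ j → |a| ≤ h → |b| ≤ h →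
        x + a • ee d i + b • ee d j ∈ Q d := by
      intro a b i j hij ha hb
      rw [add_assoc]
      exact hmemshift _ (fun k => comb_coord_abs hij a b h ha hb k)
    have hEb : ∀ i j : Fin d, |D2 d h u x i j - g2 x (ee d i) (ee d j)| ≤ 8*M*h := by
      intro i j
      by_cases hij : i = j
      · subst hij
        refine hD2est_pure h hpos x hxQ i (hmA h i habs_h) ?_
        have := hmA (-h) i habs_nh
        rwa [neg_smul, ← sub_eq_add_neg] at this
      · have hb1 := hmB h h i j hij habs_h habs_h
        have hb2 := hmB (-h) h i j hij habs_nh habs_h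
        rw [neg_smul, ← sub_eq_add_neg] at hb2
        have hb3 := hmB h (-h) i j hij habs_h habs_nh
        rw [neg_smul (h) (ee d j), ← sub_eq_add_neg] at hb3
        have hb4 := hmB (-h) (-h) i j hij habs_nh habs_nh
        rw [neg_smul, neg_smul, ← sub_eq_add_neg, ← sub_eq_add_neg] at hb4
        exact hD2est_mix h hpos x hxQ i j hij hb1 hb2 hb3 hb4
    rw [Matrix.posSemidef_iff_dotProduct_mulVec]
    constructor
    · show (Hd d h uhf x).conjTranspose = Hd d h uhf x
      ext i j
      simp only [Matrix.conjTranspose_apply, Hd, Matrix.of_apply, star_trivial]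
      exact D2symm h uhf x i j
    · intro v
      have hdot : dotProduct (star v) ((Hd d h uhf x).mulVec v)
          = ∑ i, ∑ j, v i * v j * D2 d h uhf x i j := by
        simp only [dotProduct, Matrix.mulVec, Hd, Matrix.of_apply, Pi.star_apply,
          star_trivial, Finset.mul_sum]
        exact Finset.sum_congr rfl fun i _ => Finset.sum_congr rfl fun j _ => by ring
      rw [hdot]
      have hsplit : ∀ i j : Fin d, v i * v j * D2 d h uhf x i j
          = v i * v j * (D2 d h u x i j - g2 x (ee d i) (ee d j))
            + v i * v j * g2 x (ee d i) (ee d j)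
            + (if i = j then 2*δ * (v i)^2 else 0) := by
        intro i j
        by_cases hij : i = j
        · subst hij
          rw [hD2q_pure h hne0 x i, if_pos rfl]
          ring
        · rw [hD2q_mix h hne0 x i j hij, if_neg hij]
          ring
      rw [Finset.sum_congr rfl fun i (_ : i ∈ Finset.univ) =>
        Finset.sum_congr rfl fun j (_ : j ∈ Finset.univ) => hsplit i j]
      simp only [Finset.sum_add_distrib]
      have hterm2 : ∑ i : Fin d, ∑ j : Fin d, v i * v j * g2 x (ee d i) (ee d j)
          = g2 x v v := (hbil x hxQ v v).symm
      have hterm3 : ∑ i : Fin d, (∑ j : Fin d, if i = j then 2*δ * (v i)^2 else 0)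
          = 2*δ * ∑ k, (v k)^2 := by
        rw [Finset.mul_sum]
        refine Finset.sum_congr rfl fun i _ => ?_
        rw [Finset.sum_ite_eq Finset.univ i (fun _ => 2*δ * (v i)^2)]
        simp
      rw [hterm2, hterm3]
      have hT0 : (0:ℝ) ≤ ∑ k, (v k)^2 := Finset.sum_nonneg fun k _ => sq_nonneg _
      have hpos2 : 0 ≤ g2 x v v := hq0 x hxQ (hxm.2) v
      have hterm1 : |∑ i : Fin d, ∑ j : Fin d,
          v i * v j * (D2 d h u x i j - g2 x (ee d i) (ee d j))| ≤ 8*M*h*((d:ℝ)*(∑ k, (v k)^2)) := by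
        calc |∑ i : Fin d, ∑ j : Fin d, v i * v j * (D2 d h u x i j - g2 x (ee d i) (ee d j))|
            ≤ ∑ i : Fin d, |∑ j : Fin d, v i * v j * (D2 d h u x i j - g2 x (ee d i) (ee d j))| :=
              Finset.abs_sum_le_sum_abs _ _
          _ ≤ ∑ i : Fin d, ∑ j : Fin d,
              |v i * v j * (D2 d h u x i j - g2 x (ee d i) (ee d j))| :=
              Finset.sum_le_sum fun i _ => Finset.abs_sum_le_sum_abs _ _
          _ ≤ ∑ i : Fin d, ∑ j : Fin d, (4*M*h*(v i)^2 + 4*M*h*(v j)^2) := by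
              refine Finset.sum_le_sum fun i _ => Finset.sum_le_sum fun j _ => ?_
              rw [abs_mul]
              have hvv : |v i * v j| ≤ ((v i)^2 + (v j)^2)/2 := by
                rw [abs_mul]
                nlinarith only [sq_nonneg (|v i| - |v j|), sq_abs (v i), sq_abs (v j),
                  abs_nonneg (v i), abs_nonneg (v j)]
              have hE := hEb i j
              have h8 : (0:ℝ) ≤ 8*M*h := by positivity
              calc |v i * v j| * |D2 d h u x i j - g2 x (ee d i) (ee d j)|
                  ≤ (((v i)^2 + (v j)^2)/2) * (8*M*h) :=
                    mul_le_mul hvv hE (abs_nonneg _) (by positivity)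
                _ = 4*M*h*(v i)^2 + 4*M*h*(v j)^2 := by ring
          _ = 8*M*h*((d:ℝ)*(∑ k, (v k)^2)) := by
              have h1 : ∀ i : Fin d, ∑ j : Fin d, (4*M*h*(v i)^2 + 4*M*h*(v j)^2)
                  = (d:ℝ)*(4*M*h*(v i)^2) + 4*M*h*(∑ k, (v k)^2) := by
                intro i
                rw [Finset.sum_add_distrib, Finset.sum_const, Finset.card_univ,
                  Fintype.card_fin, nsmul_eq_mul, ← Finset.mul_sum]
              rw [Finset.sum_congr rfl fun i (_ : i ∈ Finset.univ) => h1 i,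
                Finset.sum_add_distrib, Finset.sum_const, Finset.card_univ,
                Fintype.card_fin, nsmul_eq_mul, ← Finset.mul_sum, ← Finset.mul_sum]
              ring
      have h8d : 8*M*h*(d:ℝ) ≤ 2*δ := by
        have h8 : (0:ℝ) ≤ 8*M*h := by positivity
        nlinarith only [hMh, h8, hδpos]
      have hlow : -(2*δ*(∑ k, (v k)^2)) ≤ ∑ i : Fin d, ∑ j : Fin d,
          v i * v j * (D2 d h u x i j - g2 x (ee d i) (ee d j)) := by
        have hab := (abs_le.1 hterm1).1
        have hmul : 8*M*h*((d:ℝ)*(∑ k, (v k)^2)) ≤ 2*δ*(∑ k, (v k)^2) := by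
          calc 8*M*h*((d:ℝ)*(∑ k, (v k)^2)) = (8*M*h*(d:ℝ))*(∑ k, (v k)^2) := by ring
            _ ≤ 2*δ*(∑ k, (v k)^2) := mul_le_mul_of_nonneg_right h8d hT0
        linarith only [hab, hmul]
      linarith only [hlow, hpos2, hT0, hδpos]
end

section
/- Let K > 0 and let S = (u_{h_n}) be a sequence of discrete functions on nested meshes with h_n ↓ 0 such that u_{h_n} ∈ Λ¹_{h_n,K} for all n. Then there exists a function u ∈ Λ¹_K and a subsequence S' = (u_{h'}) of S such that ‖u_{h'} − u‖₀* → 0, i.e. max_{x∈M_{h'}} |u_{h'}(x) − u(x)| → 0. -/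
open Set Filter
open scoped Classical

namespace Stmt14

variable (d : ℕ)

/-- The cube `Q = [0,1]^d`. -/
def Q : Set (Fin d → ℝ) := Icc 0 1

/-- The canonical basis vector `e i`. -/
def ee (i : Fin d) : Fin d → ℝ := Pi.single i 1

/-- `x` belongs to the mesh `M_h`, i.e. `x ∈ Q` and `x = h • z` for some `z ∈ ℤ^d`. -/
def onMesh (h : ℝ) (x : Fin d → ℝ) : Prop :=
  x ∈ Icc (0 : Fin d → ℝ) 1 ∧ ∀ i, ∃ z : ℤ, x i = h * z

/-- `x` is an interior mesh point: `x ∈ M_h ∩ (0,1)^d`. -/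
def inMesh (h : ℝ) (x : Fin d → ℝ) : Prop :=
  onMesh d h x ∧ ∀ i, 0 < x i ∧ x i < 1

/-- First order forward finite difference `D_{h,i} u (x)`. -/
noncomputable def D1 (h : ℝ) (u : (Fin d → ℝ) → ℝ) (x : Fin d → ℝ) (i : Fin d) : ℝ :=
  (u (x + h • ee d i) - u x) / h

/-- Second order finite differences `D²_{h,ij} u (x)`. -/
noncomputable def D2 (h : ℝ) (u : (Fin d → ℝ) → ℝ) (x : Fin d → ℝ) (i j : Fin d) : ℝ :=
  if i = j then (u (x + h • ee d i) - 2 * u x + u (x - h • ee d i)) / h ^ 2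
  else
    (u (x + h • ee d i + h • ee d j) - u (x - h • ee d i + h • ee d j) -
        u (x + h • ee d i - h • ee d j) + u (x - h • ee d i - h • ee d j)) /
      (4 * h ^ 2)

/-- The discrete Hessian `H_h u (x)`. -/
noncomputable def Hd (h : ℝ) (u : (Fin d → ℝ) → ℝ) (x : Fin d → ℝ) :
    Matrix (Fin d) (Fin d) ℝ :=
  Matrix.of fun i j => D2 d h u x i j

/-- First partial derivative `∂_i u` (derivative taken within `Q`). -/
noncomputable def pd (u : (Fin d → ℝ) → ℝ) (i : Fin d) (y : Fin d → ℝ) : ℝ :=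
  fderivWithin ℝ u (Q d) y (ee d i)

end Stmt14

namespace Stmt14

variable {d : ℕ}


lemma add_smul_ee_apply (x : Fin d → ℝ) (c : ℝ) (i j : Fin d) :
    (x + c • ee d i) j = x j + (if j = i then c else 0) := by
  simp only [Pi.add_apply, Pi.smul_apply, ee, Pi.single_apply, smul_eq_mul, mul_ite, mul_one,
    mul_zero]

lemma add_smul_ee_apply_self (x : Fin d → ℝ) (c : ℝ) (i : Fin d) :
    (x + c • ee d i) i = x i + c := by rw [add_smul_ee_apply, if_pos rfl]

lemma add_smul_ee_apply_ne (x : Fin d → ℝ) (c : ℝ) {i j : Fin d} (hj : j ≠ i) :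
    (x + c • ee d i) j = x j := by rw [add_smul_ee_apply, if_neg hj, add_zero]

lemma onMesh_iff {h : ℝ} {x : Fin d → ℝ} :
    onMesh d h x ↔ ∀ j, (0 ≤ x j ∧ x j ≤ 1) ∧ ∃ z : ℤ, x j = h * z := by
  constructor
  · rintro ⟨⟨h0, h1⟩, hz⟩ j
    exact ⟨⟨h0 j, h1 j⟩, hz j⟩
  · intro H
    exact ⟨⟨fun j => (H j).1.1, fun j => (H j).1.2⟩, fun j => (H j).2⟩

/-- one step bound -/
lemma one_step {h K : ℝ} (hh : 0 < h) {u : (Fin d → ℝ) → ℝ} {i : Fin d}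
    {x : Fin d → ℝ}
    (hlip : onMesh d h x → onMesh d h (x + h • ee d i) → |D1 d h u x i| ≤ K)
    (hx : onMesh d h x) (hx' : onMesh d h (x + h • ee d i)) :
    |u (x + h • ee d i) - u x| ≤ K * h := by
  have := hlip hx hx'
  rw [D1, abs_div, abs_of_pos hh, div_le_iff₀ hh] at this
  linarith [this]


/-- telescoping along coordinate `i` -/
lemma telescope {h K : ℝ} (hh : 0 < h) {u : (Fin d → ℝ) → ℝ} (i : Fin d)
    (hlip : ∀ x, onMesh d h x → onMesh d h (x + h • ee d i) → |D1 d h u x i| ≤ K) :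
    ∀ m : ℕ, ∀ x : Fin d → ℝ, onMesh d h x → onMesh d h (x + ((m : ℝ) * h) • ee d i) →
      |u (x + ((m : ℝ) * h) • ee d i) - u x| ≤ K * ((m : ℝ) * h) := by
  intro m
  induction m with
  | zero =>
    intro x hx _
    simp
  | succ m ih =>
    intro x hx hx'
    rw [Nat.cast_succ] at hx' ⊢
    set y := x + ((m : ℝ) * h) • ee d i with hy
    have hxi : x i + ((m : ℝ) + 1) * h ≤ 1 := by
      have := (onMesh_iff.1 hx' i).1.2
      rwa [add_smul_ee_apply_self] at this
    have hmesh_y : onMesh d h y := by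
      rw [onMesh_iff]
      intro j
      by_cases hj : j = i
      · subst hj
        have hx0 := (onMesh_iff.1 hx j).1
        obtain ⟨z, hz⟩ := (onMesh_iff.1 hx j).2
        refine ⟨⟨?_, ?_⟩, ⟨z + m, ?_⟩⟩
        · rw [hy, add_smul_ee_apply_self]
          have : (0:ℝ) ≤ (m : ℝ) * h := by positivity
          linarith [hx0.1]
        · rw [hy, add_smul_ee_apply_self]
          nlinarith [hxi, hh]
        · rw [hy, add_smul_ee_apply_self, hz]
          push_cast
          ring
      · rw [hy, add_smul_ee_apply_ne _ _ hj]
        exact onMesh_iff.1 hx j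
    have hkey : x + (((m : ℝ) + 1) * h) • ee d i = y + h • ee d i := by
      rw [hy, add_assoc, ← add_smul]
      ring_nf
    have hx'' : onMesh d h (y + h • ee d i) := by rwa [hkey] at hx'
    have h1 : |u (y + h • ee d i) - u y| ≤ K * h :=
      one_step hh (hlip y) hmesh_y hx''
    have h2 : |u y - u x| ≤ K * ((m : ℝ) * h) := ih x hx hmesh_y
    calc |u (x + (((m : ℝ) + 1) * h) • ee d i) - u x|
        = |u (y + h • ee d i) - u x| := by rw [hkey]
      _ ≤ |u (y + h • ee d i) - u y| + |u y - u x| := abs_sub_le _ _ _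
      _ ≤ K * h + K * ((m : ℝ) * h) := add_le_add h1 h2
      _ = K * (((m : ℝ) + 1) * h) := by ring


/-- ordered one-coordinate Lipschitz -/
lemma coord_le {h K : ℝ} (hh : 0 < h) {u : (Fin d → ℝ) → ℝ} (i : Fin d)
    (hlip : ∀ x, onMesh d h x → onMesh d h (x + h • ee d i) → |D1 d h u x i| ≤ K)
    {p q : Fin d → ℝ} (hp : onMesh d h p) (hq : onMesh d h q)
    (hpq : ∀ j, j ≠ i → p j = q j) (hle : p i ≤ q i) :
    |u q - u p| ≤ K * (q i - p i) := by
  obtain ⟨zp, hzp⟩ := (onMesh_iff.1 hp i).2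
  obtain ⟨zq, hzq⟩ := (onMesh_iff.1 hq i).2
  have hz : zp ≤ zq := by
    by_contra hcon
    push_neg at hcon
    have : (zq : ℝ) < zp := by exact_mod_cast hcon
    nlinarith
  set m : ℕ := (zq - zp).toNat with hm
  have hmz : ((m : ℤ) : ℝ) = (zq : ℝ) - zp := by
    rw [hm, Int.toNat_of_nonneg (by omega)]
    push_cast; ring
  have hqi : q i - p i = (m : ℝ) * h := by
    rw [hzp, hzq]
    push_cast at hmz ⊢
    nlinarith [hmz]
  have hqp : q = p + ((m : ℝ) * h) • ee d i := by
    funext j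
    by_cases hj : j = i
    · subst hj
      rw [add_smul_ee_apply_self]
      linarith [hqi]
    · rw [add_smul_ee_apply_ne _ _ hj, hpq j hj]
  calc |u q - u p| = |u (p + ((m : ℝ) * h) • ee d i) - u p| := by rw [← hqp]
    _ ≤ K * ((m : ℝ) * h) := telescope hh i hlip m p hp (hqp ▸ hq)
    _ = K * (q i - p i) := by rw [hqi]

/-- one-coordinate Lipschitz -/
lemma coord_lip {h K : ℝ} (hh : 0 < h) {u : (Fin d → ℝ) → ℝ} (i : Fin d)
    (hlip : ∀ x, onMesh d h x → onMesh d h (x + h • ee d i) → |D1 d h u x i| ≤ K)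
    {p q : Fin d → ℝ} (hp : onMesh d h p) (hq : onMesh d h q)
    (hpq : ∀ j, j ≠ i → p j = q j) :
    |u q - u p| ≤ K * |q i - p i| := by
  rcases le_total (p i) (q i) with hle | hle
  · rw [abs_of_nonneg (show (0:ℝ) ≤ q i - p i by linarith)]
    exact coord_le hh i hlip hp hq hpq hle
  · rw [abs_of_nonpos (show q i - p i ≤ 0 by linarith), abs_sub_comm (u q) (u p)]
    have := coord_le hh i hlip hq hp (fun j hj => (hpq j hj).symm) hle
    linarith [this]

/-- full Lipschitz estimate on the mesh -/
lemma mesh_lip {h K : ℝ} (hh : 0 < h) {u : (Fin d → ℝ) → ℝ}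
    (hlip : ∀ x (i : Fin d), onMesh d h x → onMesh d h (x + h • ee d i) → |D1 d h u x i| ≤ K)
    {x y : Fin d → ℝ} (hx : onMesh d h x) (hy : onMesh d h y) :
    |u y - u x| ≤ K * ∑ j, |y j - x j| := by
  classical
  set z : Finset (Fin d) → (Fin d → ℝ) := fun s => fun j => if j ∈ s then y j else x j with hz
  have hmesh : ∀ s, onMesh d h (z s) := by
    intro s
    rw [onMesh_iff]
    intro j
    by_cases hjs : j ∈ s
    · simp only [hz, if_pos hjs]
      exact onMesh_iff.1 hy j
    · simp only [hz, if_neg hjs]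
      exact onMesh_iff.1 hx j
  have key : ∀ s : Finset (Fin d), |u (z s) - u x| ≤ K * ∑ j ∈ s, |y j - x j| := by
    intro s
    induction s using Finset.induction with
    | empty =>
      have : z ∅ = x := by funext j; simp [hz]
      simp [this]
    | insert i s hi ih =>
      have hstep : |u (z (insert i s)) - u (z s)| ≤ K * |y i - x i| := by
        have h1 : ∀ j, j ≠ i → z s j = z (insert i s) j := by
          intro j hj
          simp only [hz, Finset.mem_insert]
          by_cases hjs : j ∈ s <;> simp [hjs, hj]
        have h2 : z (insert i s) i = y i := by simp [hz]
        have h3 : z s i = x i := by simp [hz, hi]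
        have := coord_lip hh i (fun x => hlip x i) (hmesh s) (hmesh (insert i s)) h1
        rwa [h2, h3] at this
      calc |u (z (insert i s)) - u x|
          ≤ |u (z (insert i s)) - u (z s)| + |u (z s) - u x| := abs_sub_le _ _ _
        _ ≤ K * |y i - x i| + K * ∑ j ∈ s, |y j - x j| := add_le_add hstep ih
        _ = K * ∑ j ∈ insert i s, |y j - x j| := by rw [Finset.sum_insert hi]; ring
  have hu : z Finset.univ = y := by funext j; simp [hz]
  have := key Finset.univ
  rwa [hu] at this


end Stmt14

open Stmt14

set_option maxHeartbeats 1000000 in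
/-- discrete Arzelà–Ascoli: Let `K > 0` and let `u_ n : M_{h n} → ℝ` be
discrete functions on nested meshes with `h n = 1 / N n ↓ 0`, such that
`u_ n ∈ Λ¹_{h n, K}` (values and first order finite differences bounded by `K`).
Then there is `u ∈ Λ¹_K` and a subsequence along which
`max_{x ∈ M_{h'}} |u_{h'}(x) - u(x)| → 0`. -/
theorem stmt_14 (d : ℕ) (hd : 0 < d) (K : ℝ) (hK : 0 < K)
    (N : ℕ → ℕ) (hNpos : ∀ n, 0 < N n) (hNmono : StrictMono N)
    (hdvd : ∀ n, N n ∣ N (n + 1))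
    (htend : Tendsto (fun n => (1 : ℝ) / N n) atTop (nhds 0))
    (u_ : ℕ → (Fin d → ℝ) → ℝ)
    (hbdd : ∀ n, ∀ x, onMesh d (1 / N n) x → |u_ n x| ≤ K)
    (hlip : ∀ n, ∀ x, ∀ i : Fin d, onMesh d (1 / N n) x →
      onMesh d (1 / N n) (x + (1 / N n : ℝ) • ee d i) →
      |D1 d (1 / N n) (u_ n) x i| ≤ K) :
    ∃ u : (Fin d → ℝ) → ℝ,
      (∀ x ∈ Q d, |u x| ≤ K) ∧
      (∀ x ∈ Q d, ∀ i : Fin d, ∀ t : ℝ, 0 < t → x + t • ee d i ∈ Q d →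
        |u x - u (x + t • ee d i)| ≤ K * t) ∧
      ∃ φ : ℕ → ℕ, StrictMono φ ∧
        ∀ ε : ℝ, 0 < ε → ∃ j₀, ∀ j ≥ j₀, ∀ x,
          onMesh d (1 / N (φ j)) x → |u_ (φ j) x - u x| < ε := by

  classical
  set L : ℝ := K * d with hLdef
  have hd' : (1:ℝ) ≤ d := by exact_mod_cast hd
  have hL0 : 0 ≤ L := by positivity
  have hKL : K ≤ L := by nlinarith
  have hhpos : ∀ n, (0:ℝ) < 1 / N n := fun n => by
    have : (0:ℝ) < N n := by exact_mod_cast hNpos n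
    positivity
  -- Lipschitz on the mesh
  have hLipOn : ∀ n, LipschitzOnWith (Real.toNNReal L) (u_ n) {x | onMesh d (1 / N n) x} := by
    intro n
    rw [lipschitzOnWith_iff_dist_le_mul]
    intro x hx y hy
    have h1 : |u_ n x - u_ n y| ≤ K * ∑ j, |x j - y j| :=
      mesh_lip (hhpos n) (fun p i hp hp' => hlip n p i hp hp') hy hx
    have h2 : ∑ j, |x j - y j| ≤ (d:ℝ) * dist x y := by
      calc ∑ j, |x j - y j| ≤ ∑ _j : Fin d, dist x y :=
            Finset.sum_le_sum (fun j _ => by rw [← Real.dist_eq]; exact dist_le_pi_dist x y j)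
        _ = (d:ℝ) * dist x y := by
            rw [Finset.sum_const, Finset.card_univ, Fintype.card_fin, nsmul_eq_mul]
    rw [Real.dist_eq, Real.coe_toNNReal L hL0]
    calc |u_ n x - u_ n y| ≤ K * ((d:ℝ) * dist x y) := by
          refine h1.trans ?_
          exact mul_le_mul_of_nonneg_left h2 hK.le
      _ = L * dist x y := by rw [hLdef]; ring
  -- extend to globally Lipschitz functions
  have hext : ∀ n, ∃ v : (Fin d → ℝ) → ℝ, LipschitzWith (Real.toNNReal L) v ∧
      EqOn (u_ n) v {x | onMesh d (1 / N n) x} := fun n => (hLipOn n).extend_real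
  choose v hvlip hveq using hext
  -- clamp
  set w : ℕ → (Fin d → ℝ) → ℝ := fun n y => max (-K) (min K (v n y)) with hwdef
  have hwlip : ∀ n x y, |w n x - w n y| ≤ L * dist x y := by
    intro n x y
    have h1 : |w n x - w n y| ≤ max |(-K) - (-K)| |min K (v n x) - min K (v n y)| :=
      abs_max_sub_max_le_max _ _ _ _
    have h2 : |min K (v n x) - min K (v n y)| ≤ max |K - K| |v n x - v n y| :=
      abs_min_sub_min_le_max _ _ _ _
    have h3 : |v n x - v n y| ≤ L * dist x y := by
      have := (hvlip n).dist_le_mul x y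
      rwa [Real.dist_eq, Real.coe_toNNReal L hL0] at this
    simp only [sub_self, abs_zero, sub_neg_eq_add, neg_add_cancel] at h1 h2
    have h1' : |w n x - w n y| ≤ |min K (v n x) - min K (v n y)| := by
      refine h1.trans ?_
      exact max_le (abs_nonneg _) le_rfl
    have h2' : |min K (v n x) - min K (v n y)| ≤ |v n x - v n y| := by
      refine h2.trans ?_
      exact max_le (abs_nonneg _) le_rfl
    linarith
  have hwbdd : ∀ n y, |w n y| ≤ K := by
    intro n y
    rw [abs_le]
    exact ⟨le_max_left _ _, max_le (by linarith) (min_le_left _ _)⟩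
  have hweq : ∀ n x, onMesh d (1 / N n) x → w n x = u_ n x := by
    intro n x hx
    have hb := hbdd n x hx
    rw [abs_le] at hb
    have hv : v n x = u_ n x := (hveq n hx).symm
    rw [hwdef]
    simp only
    rw [hv, min_eq_right hb.2, max_eq_right hb.1]
  -- bounded continuous functions on Q
  have hQc : IsCompact (Q d) := isCompact_Icc
  haveI : CompactSpace (Q d) := isCompact_iff_compactSpace.mp hQc
  have hwlip' : ∀ n, LipschitzWith (Real.toNNReal L) (w n) := by
    intro n
    rw [lipschitzWith_iff_dist_le_mul]
    intro x y
    rw [Real.dist_eq, Real.coe_toNNReal L hL0]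
    exact hwlip n x y
  set F : ℕ → (BoundedContinuousFunction (Q d) ℝ) := fun n =>
    BoundedContinuousFunction.mkOfCompact
      ⟨fun p => w n p.1, ((hwlip' n).continuous).comp continuous_subtype_val⟩ with hFdef
  have hFapp : ∀ n (p : Q d), F n p = w n p.1 := fun n p => rfl
  -- equicontinuity
  have hequi : Equicontinuous ((↑) : (range F) → (Q d) → ℝ) := by
    refine Metric.equicontinuous_of_continuity_modulus (fun t => L * t) ?_ _ ?_
    · have : Tendsto (fun t : ℝ => L * t) (nhds 0) (nhds (L * 0)) := (tendsto_id.const_mul L)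
      simpa using this
    · rintro p q ⟨f, n, rfl⟩
      rw [Real.dist_eq, hFapp, hFapp, Subtype.dist_eq]
      exact hwlip n p.1 q.1
  have hcomp : IsCompact (closure (range F)) := by
    refine BoundedContinuousFunction.arzela_ascoli (Icc (-K) K) isCompact_Icc (range F) ?_ hequi
    rintro f p ⟨n, rfl⟩
    rw [hFapp]
    have := hwbdd n p.1
    rw [abs_le] at this
    exact this
  obtain ⟨g, -, φ, hφ, hconv⟩ :=
    hcomp.tendsto_subseq (fun n => subset_closure (mem_range_self (f := F) n))
  set u : (Fin d → ℝ) → ℝ := fun y => if hy : y ∈ Q d then g ⟨y, hy⟩ else 0 with hudef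
  have huQ : ∀ y (hy : y ∈ Q d), u y = g ⟨y, hy⟩ := by
    intro y hy
    rw [hudef]
    simp only [dif_pos hy]
  have hdistpt : ∀ j (p : Q d), |F (φ j) p - g p| ≤ dist (F (φ j)) g := by
    intro j p
    rw [← Real.dist_eq]
    exact BoundedContinuousFunction.dist_coe_le_dist p
  have hconv' : ∀ ε : ℝ, 0 < ε → ∀ᶠ j in atTop, dist (F (φ j)) g < ε := by
    intro ε hε
    exact Metric.tendsto_nhds.mp hconv ε hε
  refine ⟨u, ?_, ?_, φ, hφ, ?_⟩
  · -- boundedness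
    intro x hx
    rw [huQ x hx]
    refine le_of_forall_pos_le_add ?_
    intro ε hε
    obtain ⟨j, hj⟩ := (hconv' ε hε).exists
    have h1 := hdistpt j ⟨x, hx⟩
    have h2 := hwbdd (φ j) x
    rw [← hFapp (φ j) ⟨x, hx⟩] at h2
    calc |g ⟨x, hx⟩| ≤ |F (φ j) ⟨x, hx⟩| + |F (φ j) ⟨x, hx⟩ - g ⟨x, hx⟩| := by
          have := abs_sub_abs_le_abs_sub (g ⟨x, hx⟩) (F (φ j) ⟨x, hx⟩)
          have habs : |g ⟨x, hx⟩ - F (φ j) ⟨x, hx⟩| = |F (φ j) ⟨x, hx⟩ - g ⟨x, hx⟩| :=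
            abs_sub_comm _ _
          linarith
      _ ≤ K + ε := by linarith
  · -- coordinate Lipschitz bound
    intro x hx i t ht hxt
    refine le_of_forall_pos_le_add ?_
    intro ε hε
    have ht1 : Tendsto (fun j => (1:ℝ)/N (φ j)) atTop (nhds 0) := htend.comp hφ.tendsto_atTop
    have ht2 : Tendsto (fun j => L * ((1:ℝ)/N (φ j))) atTop (nhds 0) := by
      have := ht1.const_mul L
      simpa using this
    have e2 : ∀ᶠ j in atTop, L * ((1:ℝ)/N (φ j)) < ε/12 :=
      ht2.eventually_lt_const (by positivity)
    obtain ⟨j, hj1, hj2⟩ := ((hconv' (ε/12) (by positivity)).and e2).exists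
    set n := φ j with hn
    set h : ℝ := 1 / N n with hhdef
    have hh : 0 < h := hhpos n
    -- discrete approximations
    set x' : Fin d → ℝ := fun j' => h * ⌊x j' / h⌋ with hx'def
    have hx'app : ∀ j', x' j' = h * ⌊x j' / h⌋ := fun _ => rfl
    set m : ℕ := (⌊t / h⌋).toNat with hmdef
    set t' : ℝ := (m : ℝ) * h with ht'def
    have hxco : ∀ j', 0 ≤ x j' ∧ x j' ≤ 1 := fun j' => ⟨hx.1 j', hx.2 j'⟩
    have hfl : ∀ a : ℝ, 0 ≤ a → 0 ≤ h * ⌊a / h⌋ ∧ h * ⌊a / h⌋ ≤ a ∧ a - h * ⌊a / h⌋ ≤ h := by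
      intro a ha
      have h1 : (0:ℝ) ≤ ⌊a / h⌋ := by
        have : (0:ℤ) ≤ ⌊a / h⌋ := Int.floor_nonneg.mpr (by positivity)
        exact_mod_cast this
      have h2 : (⌊a / h⌋ : ℝ) ≤ a / h := Int.floor_le _
      have h3 : a / h < ⌊a / h⌋ + 1 := Int.lt_floor_add_one _
      refine ⟨by positivity, ?_, ?_⟩
      · calc h * ⌊a / h⌋ ≤ h * (a / h) := by nlinarith
          _ = a := by field_simp
      · have : a < h * (⌊a / h⌋ + 1) := by
          calc a = h * (a / h) := by field_simp
            _ < h * (⌊a / h⌋ + 1) := by nlinarith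
        linarith [this]
    have hx'mesh : onMesh d h x' := by
      rw [onMesh_iff]
      intro j'
      obtain ⟨ha, hb, -⟩ := hfl (x j') (hxco j').1
      exact ⟨⟨ha, hb.trans (hxco j').2⟩, ⟨⌊x j' / h⌋, rfl⟩⟩
    have hmt : (m : ℝ) = (⌊t / h⌋ : ℤ) := by
      rw [hmdef]
      have : (0:ℤ) ≤ ⌊t / h⌋ := Int.floor_nonneg.mpr (by positivity)
      exact_mod_cast Int.toNat_of_nonneg this
    have htt' : 0 ≤ t' ∧ t' ≤ t ∧ t - t' ≤ h := by
      obtain ⟨ha, hb, hc⟩ := hfl t ht.le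
      rw [ht'def, hmt]
      exact ⟨by rw [mul_comm]; exact ha, by rw [mul_comm]; exact hb, by rw [mul_comm]; exact hc⟩
    have hxit : x i + t ≤ 1 := by
      have := hxt.2 i
      rwa [add_smul_ee_apply_self] at this
    have hx't'mesh : onMesh d h (x' + t' • ee d i) := by
      rw [onMesh_iff]
      intro j'
      by_cases hji : j' = i
      · subst hji
        rw [add_smul_ee_apply_self]
        obtain ⟨ha1, hb1, -⟩ := hfl (x j') (hxco j').1
        refine ⟨⟨by linarith [htt'.1, hx'app j', ha1], ?_⟩, ⟨⌊x j' / h⌋ + ⌊t / h⌋, ?_⟩⟩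
        · have h21 := htt'.2.1
          linarith [hb1, hxit, hx'app j']
        · rw [hx'app j', ht'def, hmt]
          push_cast
          ring
      · rw [add_smul_ee_apply_ne _ _ hji]
        exact onMesh_iff.1 hx'mesh j'
    -- discrete estimate
    have hdisc : |u_ n (x' + t' • ee d i) - u_ n x'| ≤ K * t := by
      have := telescope hh i (fun p hp hp' => hlip n p i hp hp') m x' hx'mesh
        (by rw [← ht'def]; exact hx't'mesh)
      rw [← ht'def] at this
      calc |u_ n (x' + t' • ee d i) - u_ n x'| ≤ K * t' := this
        _ ≤ K * t := mul_le_mul_of_nonneg_left htt'.2.1 hK.le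
    -- distances
    have hdxx' : dist x x' ≤ h := by
      rw [dist_pi_le_iff hh.le]
      intro j'
      obtain ⟨ha, hb, hc⟩ := hfl (x j') (hxco j').1
      rw [Real.dist_eq, hx'app j', abs_of_nonneg (by linarith [hb])]
      exact hc
    have hdxt : dist (x + t • ee d i) (x' + t' • ee d i) ≤ 2 * h := by
      rw [dist_pi_le_iff (by linarith)]
      intro j'
      by_cases hji : j' = i
      · subst hji
        rw [add_smul_ee_apply_self, add_smul_ee_apply_self, Real.dist_eq, hx'app j']
        obtain ⟨ha, hb, hc⟩ := hfl (x j') (hxco j').1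
        rw [abs_of_nonneg (by linarith [htt'.2.1, htt'.2.2, hb])]
        linarith [hc, htt'.2.2]
      · rw [add_smul_ee_apply_ne _ _ hji, add_smul_ee_apply_ne _ _ hji, Real.dist_eq,
          hx'app j']
        obtain ⟨ha, hb, hc⟩ := hfl (x j') (hxco j').1
        rw [abs_of_nonneg (by linarith [hb])]
        linarith [hc]
    -- memberships in Q
    have hx'Q : x' ∈ Q d := hx'mesh.1
    have hx't'Q : x' + t' • ee d i ∈ Q d := hx't'mesh.1
    -- assemble
    have e1 : |g ⟨x, hx⟩ - F n ⟨x, hx⟩| ≤ dist (F n) g := by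
      rw [abs_sub_comm]; exact hdistpt j _
    have e5 : |F n ⟨x + t • ee d i, hxt⟩ - g ⟨x + t • ee d i, hxt⟩| ≤ dist (F n) g :=
      hdistpt j _
    have e2 : |F n ⟨x, hx⟩ - F n ⟨x', hx'Q⟩| ≤ L * h := by
      rw [hFapp, hFapp]
      calc |w n x - w n x'| ≤ L * dist x x' := hwlip n x x'
        _ ≤ L * h := mul_le_mul_of_nonneg_left hdxx' hL0
    have e4 : |F n ⟨x' + t' • ee d i, hx't'Q⟩ - F n ⟨x + t • ee d i, hxt⟩| ≤ L * (2 * h) := by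
      rw [hFapp, hFapp]
      rw [abs_sub_comm]
      calc |w n (x + t • ee d i) - w n (x' + t' • ee d i)|
          ≤ L * dist (x + t • ee d i) (x' + t' • ee d i) := hwlip n _ _
        _ ≤ L * (2 * h) := mul_le_mul_of_nonneg_left hdxt hL0
    have e3 : |F n ⟨x', hx'Q⟩ - F n ⟨x' + t' • ee d i, hx't'Q⟩| ≤ K * t := by
      rw [hFapp, hFapp, hweq n _ hx'mesh, hweq n _ hx't'mesh, abs_sub_comm]
      exact hdisc
    rw [huQ x hx, huQ _ hxt]
    have hLh : L * h < ε / 12 := hj2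
    have hD : dist (F n) g < ε / 12 := hj1
    have tri : |g ⟨x, hx⟩ - g ⟨x + t • ee d i, hxt⟩| ≤
        |g ⟨x, hx⟩ - F n ⟨x, hx⟩| + |F n ⟨x, hx⟩ - F n ⟨x', hx'Q⟩| +
        |F n ⟨x', hx'Q⟩ - F n ⟨x' + t' • ee d i, hx't'Q⟩| +
        |F n ⟨x' + t' • ee d i, hx't'Q⟩ - F n ⟨x + t • ee d i, hxt⟩| +
        |F n ⟨x + t • ee d i, hxt⟩ - g ⟨x + t • ee d i, hxt⟩| := by
      have := abs_sub_le (g ⟨x, hx⟩) (F n ⟨x, hx⟩) (g ⟨x + t • ee d i, hxt⟩)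
      have h2 := abs_sub_le (F n ⟨x, hx⟩) (F n ⟨x', hx'Q⟩) (g ⟨x + t • ee d i, hxt⟩)
      have h3 := abs_sub_le (F n ⟨x', hx'Q⟩) (F n ⟨x' + t' • ee d i, hx't'Q⟩)
        (g ⟨x + t • ee d i, hxt⟩)
      have h4 := abs_sub_le (F n ⟨x' + t' • ee d i, hx't'Q⟩) (F n ⟨x + t • ee d i, hxt⟩)
        (g ⟨x + t • ee d i, hxt⟩)
      linarith
    linarith [e1, e2, e3, e4, e5, tri, hLh, hD]
  · -- uniform convergence on meshes
    intro ε hε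
    obtain ⟨j₀, hj₀⟩ := eventually_atTop.mp (hconv' ε hε)
    refine ⟨j₀, fun j hj x hxm => ?_⟩
    have hxQ : x ∈ Q d := hxm.1
    have h1 : u_ (φ j) x = F (φ j) ⟨x, hxQ⟩ := by
      rw [hFapp]
      exact (hweq (φ j) x hxm).symm
    rw [h1, huQ x hxQ]
    calc |F (φ j) ⟨x, hxQ⟩ - g ⟨x, hxQ⟩| ≤ dist (F (φ j)) g := hdistpt j _
      _ < ε := hj₀ j hj
end
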